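/- arXiv:2310.02627 — 5 statements merged into one kernel-verified Lean document; each statement's English description precedes it below -/
import Mathlib

section
/- Let p be an odd prime and G a finite p-group whose derived subgroup G' is cyclic. Then every conjugacy class C of G is a coset Hg for some subgroup H of G' and some g in C. -/
open Pointwise

section AuxiliaryLemmas

open Finset Subgroup MulAction



lemma int_modEq_add_mul (n X Y : ℤ) : X + n * Y ≡ X [ZMOD n] := by
  have : n ∣ X - (X + n * Y) := ⟨-Y, by ring⟩
  exact Int.ModEq.symm (Int.modEq_iff_dvd.mpr (by simpa using this))

lemma sum_range_mul_geom (a : ℤ) (m n : ℕ) :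
    (∑ i ∈ range (m * n), a ^ i)
      = (∑ i ∈ range m, a ^ i) * (∑ j ∈ range n, (a ^ m) ^ j) := by
  induction n with
  | zero => simp
  | succ n ih =>
    rw [Nat.mul_succ, Finset.sum_range_add, ih, Finset.sum_range_succ]
    have : ∀ i, a ^ (m * n + i) = a ^ (m*n) * a ^ i := fun i => pow_add a _ i
    simp only [this, ← Finset.mul_sum, ← pow_mul]
    ring

lemma geom_block (p : ℕ) (hodd : Odd p) (b : ℤ)
    (hb : b ≡ 1 [ZMOD (p:ℤ)]) :
    (∑ j ∈ range p, b ^ j) ≡ (p:ℤ) [ZMOD (p:ℤ)^2] := by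
  obtain ⟨m, hm⟩ : (p:ℤ) ∣ b - 1 := Int.ModEq.dvd hb.symm
  have hbe : b = 1 + (p:ℤ) * m := by linarith
  have hpow : ∀ j : ℕ, b ^ j ≡ 1 + (j:ℤ) * ((p:ℤ)*m) [ZMOD (p:ℤ)^2] := by
    intro j
    induction j with
    | zero => simp
    | succ j ih =>
      have h1 : b ^ (j+1) = b ^ j * b := by ring
      rw [h1]
      calc b ^ j * b
          ≡ (1 + (j:ℤ) * ((p:ℤ)*m)) * b [ZMOD (p:ℤ)^2] := Int.ModEq.mul_right _ ih
        _ = (1 + ((j:ℤ)+1) * ((p:ℤ)*m)) + (p:ℤ)^2 * ((j:ℤ) * m * m) := by rw [hbe]; ring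
        _ ≡ 1 + ((j:ℤ)+1) * ((p:ℤ)*m) [ZMOD (p:ℤ)^2] := int_modEq_add_mul _ _ _
        _ = 1 + ((j+1 : ℕ) : ℤ) * ((p:ℤ)*m) := by push_cast; ring
  obtain ⟨e, he⟩ : ∃ e : ℕ, p = 2 * e + 1 := hodd
  have hsum : (∑ j ∈ range p, ((j:ℤ))) = (p:ℤ) * e := by
    have h2 : (∑ j ∈ range p, (j:ℤ)) * 2 = (p:ℤ) * ((p:ℤ) - 1) := by
      have := Finset.sum_range_id_mul_two p
      have hcast : ((∑ i ∈ range p, i : ℕ) : ℤ) * 2 = ((p * (p-1) : ℕ) : ℤ) := by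
        exact_mod_cast congrArg (Nat.cast : ℕ → ℤ) this
      push_cast [Nat.cast_sub (by omega : 1 ≤ p)] at hcast
      simpa using hcast
    have : (p:ℤ) - 1 = 2 * e := by rw [he]; push_cast; ring
    rw [this] at h2
    linarith
  calc (∑ j ∈ range p, b ^ j)
      ≡ (∑ j ∈ range p, (1 + (j:ℤ) * ((p:ℤ)*m))) [ZMOD (p:ℤ)^2] := by
        -- sum of modEq
        induction' (range p) using Finset.induction with i s hi ihs
        · rfl
        · rw [Finset.sum_insert hi, Finset.sum_insert hi]
          exact (hpow i).add ihs
    _ = (p:ℤ) + (∑ j ∈ range p, (j:ℤ)) * ((p:ℤ)*m) := by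
        rw [Finset.sum_add_distrib, ← Finset.sum_mul]; simp
    _ = (p:ℤ) + (p:ℤ)^2 * ((e:ℤ) * m) := by rw [hsum]; ring
    _ ≡ (p:ℤ) [ZMOD (p:ℤ)^2] := int_modEq_add_mul _ _ _

lemma geom_S (p : ℕ) (hp : p.Prime) (hodd : Odd p) (a : ℤ)
    (ha : a ≡ 1 [ZMOD (p:ℤ)]) (k : ℕ) :
    (∑ i ∈ range (p ^ k), a ^ i) ≡ (p:ℤ)^k [ZMOD (p:ℤ)^(k+1)] := by
  induction k with
  | zero => simp
  | succ k ih =>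
    have hsplit : (∑ i ∈ range (p ^ (k+1)), a ^ i)
        = (∑ i ∈ range (p^k), a ^ i) * (∑ j ∈ range p, (a ^ (p^k)) ^ j) := by
      rw [← sum_range_mul_geom a (p^k) p, pow_succ]
    have hb : a ^ (p^k) ≡ 1 [ZMOD (p:ℤ)] := by
      calc a ^ (p^k) ≡ 1 ^ (p^k) [ZMOD (p:ℤ)] := ha.pow _
        _ = 1 := one_pow _
    have hT := geom_block p hodd (a ^ (p^k)) hb
    obtain ⟨α, hα⟩ : ((p:ℤ))^(k+1) ∣ (∑ i ∈ range (p^k), a ^ i) - (p:ℤ)^k :=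
      (Int.modEq_iff_dvd.mp ih.symm)
    obtain ⟨β, hβ⟩ : ((p:ℤ))^2 ∣ (∑ j ∈ range p, (a ^ (p^k)) ^ j) - (p:ℤ) :=
      (Int.modEq_iff_dvd.mp hT.symm)
    have hS : (∑ i ∈ range (p^k), a ^ i) = (p:ℤ)^k + (p:ℤ)^(k+1) * α := by linarith
    have hTT : (∑ j ∈ range p, (a ^ (p^k)) ^ j) = (p:ℤ) + (p:ℤ)^2 * β := by linarith
    rw [hsplit, hS, hTT]
    have : ((p:ℤ)^k + (p:ℤ)^(k+1) * α) * ((p:ℤ) + (p:ℤ)^2 * β)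
        = (p:ℤ)^(k+1) + (p:ℤ)^(k+2) * (β + α + (p:ℤ)*(α*β)) := by ring
    rw [this]
    exact int_modEq_add_mul _ _ _


variable {G : Type*} [Group G] [Finite G]

lemma card_class_dvd_card (g : G) : Nat.card {y : G | IsConj g y} ∣ Nat.card G := by
  have h1 : {y : G | IsConj g y} = orbit (ConjAct G) g := by
    ext y
    rw [Set.mem_setOf_eq]
    exact isConj_comm.trans ConjAct.mem_orbit_conjAct.symm
  rw [h1, Nat.card_congr (orbitEquivQuotientStabilizer (ConjAct G) g)]
  have := Subgroup.index_dvd_card (G := ConjAct G) (stabilizer (ConjAct G) g)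
  rwa [Subgroup.index_eq_card] at this


lemma pow_comm_of_class (p m k : ℕ) (hp : p.Prime) (hG : Nat.card G = p ^ m)
    (g x : G) (hk : Nat.card {y : G | IsConj g y} = p ^ k) :
    x ^ p ^ k * g = g * x ^ p ^ k := by
  set Z := Subgroup.zpowers x with hZ
  set S : Subgroup ↥Z := Subgroup.comap Z.subtype (Subgroup.centralizer {g}) with hS
  haveI : S.Normal := Subgroup.normal_of_comm S
  let φ : ↥Z → {y : G // IsConj g y} :=
    fun z => ⟨(z : G) * g * (z : G)⁻¹, isConj_iff.mpr ⟨z, rfl⟩⟩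
  have hmemS : ∀ v : ↥Z, v ∈ S ↔ g * (v : G) = (v : G) * g := by
    intro v
    rw [hS, Subgroup.mem_comap, Subgroup.mem_centralizer_iff]
    constructor
    · intro h; exact h g rfl
    · intro h a ha
      obtain rfl : a = g := ha
      exact h
  have hresp : ∀ z w : ↥Z, z⁻¹ * w ∈ S ↔ φ z = φ w := by
    intro z w
    rw [hmemS]
    constructor
    · intro h'
      apply Subtype.ext
      show (z : G) * g * (z:G)⁻¹ = (w : G) * g * (w:G)⁻¹
      have hc : ((z⁻¹ * w : ↥Z) : G) = (z:G)⁻¹ * (w:G) := rfl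
      rw [hc] at h'
      calc (z:G) * g * (z:G)⁻¹ = (z:G) * (g * ((z : G)⁻¹ * (w:G))) * (w:G)⁻¹ := by group
        _ = (z:G) * ((((z : G)⁻¹ * (w:G))) * g) * (w:G)⁻¹ := by rw [h']
        _ = (w : G) * g * (w:G)⁻¹ := by group
    · intro h
      have h' : (z : G) * g * (z:G)⁻¹ = (w : G) * g * (w:G)⁻¹ := congrArg Subtype.val h
      have hc : ((z⁻¹ * w : ↥Z) : G) = (z:G)⁻¹ * (w:G) := rfl
      rw [hc]
      calc g * ((z : G)⁻¹ * (w:G)) = (z:G)⁻¹ * ((z:G) * g * (z:G)⁻¹) * (w:G) := by group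
        _ = (z:G)⁻¹ * ((w:G) * g * (w:G)⁻¹) * (w:G) := by rw [h']
        _ = ((z:G)⁻¹ * (w:G)) * g := by group
  let F : (↥Z ⧸ S) → {y : G // IsConj g y} :=
    Quotient.lift φ (by
      intro z w hzw
      exact (hresp z w).mp ((QuotientGroup.leftRel_apply).mp hzw))
  have hF : Function.Injective F := by
    intro q1 q2
    induction q1 using QuotientGroup.induction_on
    induction q2 using QuotientGroup.induction_on
    rename_i z w
    intro h
    have hphi : φ z = φ w := h
    show (z : ↥Z ⧸ S) = (w : ↥Z ⧸ S)
    rw [QuotientGroup.eq]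
    exact (hresp z w).mpr hphi
  have hle : S.index ≤ p ^ k := by
    rw [Subgroup.index_eq_card, ← hk]
    exact Nat.card_le_card_of_injective F hF
  have hdvdZ : S.index ∣ Nat.card ↥Z := Subgroup.index_dvd_card S
  have hZdvd : Nat.card ↥Z ∣ p ^ m := hG ▸ Subgroup.card_subgroup_dvd_card Z
  obtain ⟨j, hj, hjind⟩ := (Nat.dvd_prime_pow hp).mp (hdvdZ.trans hZdvd)
  have hjk : j ≤ k := by
    by_contra hc
    push_neg at hc
    have : p ^ k < p ^ j := Nat.pow_lt_pow_right hp.one_lt hc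
    omega
  obtain ⟨t, ht⟩ : S.index ∣ p ^ k := hjind ▸ pow_dvd_pow p hjk
  set x' : ↥Z := ⟨x, Subgroup.mem_zpowers x⟩ with hx'
  have hmem : x' ^ p ^ k ∈ S := by
    rw [ht, pow_mul]
    exact Subgroup.pow_mem S (Subgroup.pow_index_mem S x') t
  have := (hmemS _).mp hmem
  have hcast : ((x' ^ p ^ k : ↥Z) : G) = x ^ p ^ k := rfl
  rw [hcast] at this
  exact this.symm

lemma key_claim {G : Type*} [Group G] [Finite G] (p m n k : ℕ) (hp : p.Prime) (hodd : Odd p)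
    (hG : Nat.card G = p ^ m) (c : ↥(commutator G)) (hc : ∀ y, y ∈ Subgroup.zpowers c)
    (hn : Nat.card ↥(commutator G) = p ^ n) (hkn : k ≤ n)
    (g : G) (hk : Nat.card {y : G | IsConj g y} = p ^ k) (u : G) :
    (u * g * u⁻¹ * g⁻¹) ^ p ^ k = 1 := by
  have hordc : orderOf c = p ^ n := by
    rw [orderOf_eq_card_of_forall_mem_zpowers hc, hn]
  have hordcG : orderOf ((c : G)) = p ^ n := by
    rw [← hordc]
    exact orderOf_injective (commutator G).subtype Subtype.coe_injective c
  have hordz : ∀ z : ℤ, ((p:ℤ))^n ∣ z ↔ (↑c : G) ^ z = 1 := by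
    intro z
    rw [← orderOf_dvd_iff_zpow_eq_one, hordcG]
    push_cast
    rfl
  suffices h : ∀ x : G, (g⁻¹ * x⁻¹ * g * x) ^ p ^ k = 1 by
    have hw := h u⁻¹
    have hconj : u * g * u⁻¹ * g⁻¹ = g * (g⁻¹ * u⁻¹⁻¹ * g * u⁻¹) * g⁻¹ := by group
    rw [hconj, conj_pow, hw, mul_one, mul_inv_cancel]
  intro x
  have hwmem : g⁻¹ * x⁻¹ * g * x ∈ commutator G := by
    open scoped commutatorElement in
    have : ⁅g⁻¹, x⁻¹⁆ ∈ commutator G :=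
      Subgroup.commutator_mem_commutator (Subgroup.mem_top _) (Subgroup.mem_top _)
    simpa [commutatorElement_def] using this
  set wc : ↥(commutator G) := ⟨g⁻¹ * x⁻¹ * g * x, hwmem⟩ with hwc
  obtain ⟨b, hb⟩ := Subgroup.mem_zpowers_iff.mp (hc wc)
  have hbG : (↑c : G) ^ b = g⁻¹ * x⁻¹ * g * x := by
    have := congrArg Subtype.val hb
    simpa using this
  have hconjmem : x⁻¹ * ↑c * x ∈ commutator G := by
    have hnor : (commutator G).Normal := Subgroup.commutator_normal ⊤ ⊤
    simpa [mul_assoc] using hnor.conj_mem (↑c) c.2 x⁻¹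
  obtain ⟨a, ha⟩ := Subgroup.mem_zpowers_iff.mp (hc ⟨_, hconjmem⟩)
  have haG : x⁻¹ * (↑c : G) * x = (↑c : G) ^ a := by
    have := congrArg Subtype.val ha
    simpa using this.symm
  have base : ∀ z : ℤ, x⁻¹ * ((↑c : G)) ^ z * x = ((↑c : G)) ^ (a * z) := by
    intro z
    have h1 : x⁻¹ * (↑c : G) ^ z * (x⁻¹)⁻¹ = (x⁻¹ * ↑c * (x⁻¹)⁻¹) ^ z := conj_zpow.symm
    rw [inv_inv] at h1
    rw [h1, haG, ← zpow_mul]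
  -- degenerate case
  by_cases hn0 : n = 0
  · have : orderOf c = 1 := by rw [hordc, hn0, pow_zero]
    have hc1 : c = 1 := orderOf_eq_one_iff.mp this
    have : (↑c : G) ^ b = 1 := by rw [hc1]; simp
    rw [hbG] at this
    rw [this, one_pow]
  -- a ≡ 1 mod p
  obtain ⟨r, hrm, hr⟩ := (Nat.dvd_prime_pow hp).mp (hG ▸ orderOf_dvd_natCard x)
  have hct : ∀ t : ℕ, (x ^ t)⁻¹ * (↑c : G) * x ^ t = (↑c : G) ^ ((a : ℤ) ^ t) := by
    intro t
    induction t with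
    | zero => simp
    | succ t ih =>
      have hsplit : (x ^ (t+1))⁻¹ * (↑c : G) * x ^ (t+1)
          = x⁻¹ * ((x ^ t)⁻¹ * (↑c : G) * x ^ t) * x := by
        rw [pow_succ]; group
      rw [hsplit, ih, base]
      congr 1
      ring
  have hcr : (↑c : G) ^ ((a:ℤ) ^ (p ^ r) - 1) = 1 := by
    have hx1 : x ^ p ^ r = 1 := by rw [← hr]; exact pow_orderOf_eq_one x
    have h0 := hct (p ^ r)
    rw [hx1] at h0
    simp only [inv_one, one_mul, mul_one] at h0
    rw [zpow_sub, zpow_one, ← h0]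
    simp
  have hadvd : ((p:ℤ))^n ∣ (a:ℤ) ^ (p ^ r) - 1 := (hordz _).mpr hcr
  have hpdvd : ((p:ℤ)) ∣ (a:ℤ) ^ (p ^ r) - 1 := by
    refine dvd_trans ?_ hadvd
    exact dvd_pow_self _ hn0
  have ha1 : (a : ℤ) ≡ 1 [ZMOD (p:ℤ)] := by
    haveI : Fact p.Prime := ⟨hp⟩
    have h1 : ((a : ℤ) : ZMod p) ^ (p ^ r) - 1 = 0 := by
      have := (ZMod.intCast_zmod_eq_zero_iff_dvd _ p).mpr hpdvd
      push_cast at this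
      linear_combination this
    have h2 : ((a : ℤ) : ZMod p) ^ (p ^ r) = ((a : ℤ) : ZMod p) := ZMod.pow_card_pow _
    have h3 : ((a : ℤ) : ZMod p) = 1 := by rw [← h2]; linear_combination h1
    have h4 : ((a : ℤ) : ZMod p) = ((1 : ℤ) : ZMod p) := by rw [h3]; norm_num
    exact (ZMod.intCast_eq_intCast_iff _ _ _).mp h4
  -- main induction on conjugates of g
  have hinduct : ∀ t : ℕ, (x ^ t)⁻¹ * g * x ^ t
      = g * ((↑c : G) ^ (b * ∑ i ∈ range t, (a:ℤ) ^ i)) := by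
    intro t
    induction t with
    | zero => simp
    | succ t ih =>
      have hsplit : (x ^ (t+1))⁻¹ * g * x ^ (t+1)
          = x⁻¹ * ((x ^ t)⁻¹ * g * x ^ t) * x := by
        rw [pow_succ]; group
      have hxgx : x⁻¹ * g * x = g * (↑c : G) ^ b := by
        rw [hbG]; group
      rw [hsplit, ih]
      have hsplit2 : x⁻¹ * (g * (↑c : G) ^ (b * ∑ i ∈ range t, (a:ℤ) ^ i)) * x
          = (x⁻¹ * g * x) * (x⁻¹ * (↑c : G) ^ (b * ∑ i ∈ range t, (a:ℤ) ^ i) * x) := by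
        group
      rw [hsplit2, base, hxgx, mul_assoc, ← zpow_add, geom_sum_succ]
      have he : b + a * (b * ∑ i ∈ range t, (a:ℤ) ^ i)
          = b * (a * ∑ i ∈ range t, (a:ℤ) ^ i + 1) := by ring
      rw [he]
  -- combine with commuting power
  have hxc := pow_comm_of_class p m k hp hG g x hk
  have hgfix : (x ^ p ^ k)⁻¹ * g * x ^ p ^ k = g := by
    rw [mul_assoc, ← hxc, ← mul_assoc, inv_mul_cancel, one_mul]
  have hczero : (↑c : G) ^ (b * ∑ i ∈ range (p ^ k), (a:ℤ) ^ i) = 1 := by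
    have h2 : g * (↑c : G) ^ (b * ∑ i ∈ range (p ^ k), (a:ℤ) ^ i) = g := by
      rw [← hinduct (p ^ k)]
      exact hgfix
    have h3 := congrArg (fun y => g⁻¹ * y) h2
    simpa [← mul_assoc] using h3
  have hdvdS : ((p:ℤ))^n ∣ b * ∑ i ∈ range (p ^ k), (a:ℤ) ^ i := (hordz _).mpr hczero
  -- structure of the geometric sum
  obtain ⟨q, hq⟩ : ((p:ℤ))^(k+1) ∣ (∑ i ∈ range (p ^ k), (a:ℤ) ^ i) - (p:ℤ)^k :=
    Int.ModEq.dvd (geom_S p hp hodd (a:ℤ) ha1 k).symm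
  set u' : ℤ := 1 + (p:ℤ) * q with hu'
  have hS : (∑ i ∈ range (p ^ k), (a:ℤ) ^ i) = (p:ℤ)^k * u' := by
    rw [hu']; rw [pow_succ] at hq; linarith
  -- cancel p^k
  obtain ⟨t, ht⟩ := hdvdS
  have hpnk : ((p:ℤ))^n = (p:ℤ)^(n-k) * (p:ℤ)^k := by
    rw [← pow_add]
    congr 1
    omega
  have hcanc : b * u' = (p:ℤ)^(n-k) * t := by
    have hpk : ((p:ℤ))^k ≠ 0 := pow_ne_zero _ (by exact_mod_cast hp.ne_zero)
    apply mul_right_cancel₀ hpk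
    calc b * u' * (p:ℤ)^k = b * ((p:ℤ)^k * u') := by ring
      _ = (p:ℤ)^n * t := by rw [← hS]; exact ht
      _ = (p:ℤ)^(n-k) * t * (p:ℤ)^k := by rw [hpnk]; ring
  have hcop : IsCoprime ((p:ℤ)^(n-k)) u' := by
    apply IsCoprime.pow_left
    exact ⟨-q, 1, by rw [hu']; ring⟩
  have hbdvd : ((p:ℤ))^(n-k) ∣ b := hcop.dvd_of_dvd_mul_right ⟨t, hcanc⟩
  -- conclude
  obtain ⟨s, hs⟩ := hbdvd
  have hfin : (↑c : G) ^ (b * ((p ^ k : ℕ) : ℤ)) = 1 := by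
    apply (hordz _).mp
    refine ⟨s, ?_⟩
    rw [hs, hpnk]
    push_cast
    ring
  calc (g⁻¹ * x⁻¹ * g * x) ^ p ^ k = ((↑c : G) ^ b) ^ (p ^ k) := by rw [hbG]
    _ = ((↑c : G) ^ b) ^ ((p ^ k : ℕ) : ℤ) := by rw [zpow_natCast]
    _ = (↑c : G) ^ (b * ((p ^ k : ℕ) : ℤ)) := by rw [← zpow_mul]
    _ = 1 := hfin

end AuxiliaryLemmas

section Main

open Finset Subgroup MulAction

/-- Let `p` be an odd prime and `G` a finite `p`-group whose derived
subgroup is cyclic. Then every conjugacy class of `G` is a coset `H * g` for some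
subgroup `H` of the derived subgroup and some `g` in the class. -/
theorem conjClass_is_coset (p : ℕ) (hp : p.Prime) (hodd : Odd p)
    (G : Type*) [Group G] [Finite G] (hG : ∃ n : ℕ, Nat.card G = p ^ n)
    (hcyc : IsCyclic ↥(commutator G)) (g : G) :
    ∃ H : Subgroup G, H ≤ commutator G ∧
      {x : G | IsConj g x} = (H : Set G) * ({g} : Set G) := by
  obtain ⟨m, hGm⟩ := hG
  obtain ⟨n, hnm, hn⟩ := (Nat.dvd_prime_pow hp).mp
    (hGm ▸ Subgroup.card_subgroup_dvd_card (commutator G))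
  obtain ⟨k, hkm, hk⟩ := (Nat.dvd_prime_pow hp).mp (hGm ▸ card_class_dvd_card g)
  obtain ⟨c, hc⟩ := hcyc.exists_generator
  have hordc : orderOf c = p ^ n := by
    rw [orderOf_eq_card_of_forall_mem_zpowers hc, hn]
  set Kset : Set G := {h : G | ∃ u : G, u * g * u⁻¹ * g⁻¹ = h} with hKset
  have hclassK : {x : G | IsConj g x} = Kset * ({g} : Set G) := by
    ext y
    simp only [Set.mem_setOf_eq, Set.mul_singleton, Set.mem_image, hKset]
    constructor
    · rintro hy
      obtain ⟨u, hu⟩ := isConj_iff.mp hy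
      exact ⟨u * g * u⁻¹ * g⁻¹, ⟨u, rfl⟩, by rw [← hu]; group⟩
    · rintro ⟨h, ⟨u, rfl⟩, rfl⟩
      exact isConj_iff.mpr ⟨u, by group⟩
  have hKcard : Kset.ncard = p ^ k := by
    have h1 : {x : G | IsConj g x} = (fun h => h * g) '' Kset := by
      rw [hclassK, Set.mul_singleton]
    have h2 : ((fun h => h * g) '' Kset).ncard = Kset.ncard :=
      Set.ncard_image_of_injective _ (mul_left_injective g)
    rw [← h2, ← h1, ← Nat.card_coe_set_eq, hk]
  have hKsub : Kset ⊆ (commutator G : Set G) := by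
    rintro h ⟨u, rfl⟩
    open scoped commutatorElement in
    have : ⁅u, g⁆ ∈ commutator G :=
      Subgroup.commutator_mem_commutator (Subgroup.mem_top _) (Subgroup.mem_top _)
    simpa [commutatorElement_def, mul_assoc] using this
  have hkn : k ≤ n := by
    have h1 : Kset.ncard ≤ (commutator G : Set G).ncard :=
      Set.ncard_le_ncard hKsub (Set.toFinite _)
    rw [hKcard, ← Nat.card_coe_set_eq] at h1
    have h2 : Nat.card ↥((commutator G : Set G)) = p ^ n := by
      rw [← hn]
      rfl
    rw [h2] at h1
    exact (Nat.pow_le_pow_iff_right hp.one_lt).mp h1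
  set d := n - k with hd
  set ce : ↥(commutator G) := c ^ (p ^ d) with hce
  set H : Subgroup G := Subgroup.map (commutator G).subtype (Subgroup.zpowers ce) with hH
  have hHle : H ≤ commutator G := Subgroup.map_subtype_le _
  have hordce : orderOf ce = p ^ k := by
    rw [hce, orderOf_pow' c (pow_ne_zero d hp.ne_zero), hordc,
      Nat.gcd_eq_right (pow_dvd_pow p (by omega : d ≤ n)), Nat.pow_div (by omega) hp.pos]
    congr 1
    omega
  have hHcard : Nat.card ↥H = p ^ k := by
    rw [hH, ← Nat.card_congr
      (Subgroup.equivMapOfInjective (Subgroup.zpowers ce) _ (subtype_injective _)).toEquiv,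
      Nat.card_zpowers, hordce]
  have hKH : Kset ⊆ (H : Set G) := by
    rintro h ⟨u, rfl⟩
    have hmem : u * g * u⁻¹ * g⁻¹ ∈ commutator G := hKsub ⟨u, rfl⟩
    have hpow := key_claim p m n k hp hodd hGm c hc hn hkn g hk u
    obtain ⟨z, hz⟩ := Subgroup.mem_zpowers_iff.mp (hc ⟨_, hmem⟩)
    have hzG : (↑c : G) ^ z = u * g * u⁻¹ * g⁻¹ := by
      have := congrArg Subtype.val hz
      simpa using this
    have hordcG : orderOf ((c : G)) = p ^ n := by
      rw [← hordc]
      exact orderOf_injective (commutator G).subtype Subtype.coe_injective c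
    have hdvd : ((p : ℤ)) ^ n ∣ z * ((p ^ k : ℕ) : ℤ) := by
      have h0 : ((orderOf ((c : G)) : ℤ)) ∣ z * ((p ^ k : ℕ) : ℤ) := by
        rw [orderOf_dvd_iff_zpow_eq_one, zpow_mul, hzG, zpow_natCast]
        exact hpow
      rw [hordcG] at h0
      exact_mod_cast h0
    obtain ⟨t, ht⟩ := hdvd
    have hzt : z = ((p : ℤ)) ^ d * t := by
      have hpk : ((p : ℤ)) ^ k ≠ 0 := pow_ne_zero _ (by exact_mod_cast hp.ne_zero)
      apply mul_right_cancel₀ hpk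
      have hpnk : ((p : ℤ)) ^ n = (p : ℤ) ^ d * (p : ℤ) ^ k := by
        rw [← pow_add]
        congr 1
        omega
      calc z * (p : ℤ) ^ k = z * ((p ^ k : ℕ) : ℤ) := by push_cast; ring
        _ = (p : ℤ) ^ n * t := ht
        _ = (p : ℤ) ^ d * t * (p : ℤ) ^ k := by rw [hpnk]; ring
    rw [hH]
    rw [SetLike.mem_coe, Subgroup.mem_map]
    refine ⟨ce ^ t, Subgroup.mem_zpowers_iff.mpr ⟨t, rfl⟩, ?_⟩
    have : ce ^ t = ⟨u * g * u⁻¹ * g⁻¹, hmem⟩ := by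
      rw [hce, ← hz, hzt]
      rw [← zpow_natCast c (p ^ d), ← zpow_mul]
      push_cast
      ring_nf
    rw [this]
    rfl
  have hfinal : Kset = (H : Set G) := by
    apply Set.eq_of_subset_of_ncard_le hKH
    rw [← Nat.card_coe_set_eq]
    have : Nat.card ↥((H : Set G)) = p ^ k := by rw [← hHcard]; rfl
    rw [this, hKcard]
  exact ⟨H, hHle, by rw [hclassK, hfinal]⟩

end Main
end

section
/- Let G be a finite p-group and N a normal subgroup of G. Then there exists a Jennings set S of G such that N ∩ S is a Jennings set of N. -/
/-- The Jennings (Brauer–Jennings–Zassenhaus) series of a group: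
`D_n(G) = ∏_{i p^j ≥ n} γ_i(G)^{p^j}` (here `γ_{i+1}(G) = lowerCentralSeries G i`). -/
def jennings (p : ℕ) (G : Type*) [Group G] (n : ℕ) : Subgroup G :=
  ⨆ (i : ℕ) (j : ℕ) (_ : n ≤ (i + 1) * p ^ j),
    Subgroup.closure {x : G | ∃ y ∈ (⊤ : Subgroup G).lowerCentralSeries i, x = y ^ p ^ j}

/-- A *Jennings set* of a finite `p`-group: a set `S` of nontrivial elements such that for
each `i ≥ 1` the elements of `S` lying in `D_i(G) \ D_{i+1}(G)` project onto a basis of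
the elementary abelian quotient `D_i(G)/D_{i+1}(G)`, i.e. they generate it and their
number is the `p`-logarithm of its order. -/
def IsJenningsSet (p : ℕ) {G : Type*} [Group G] (S : Set G) : Prop :=
  (1 : G) ∉ S ∧
  ∀ i : ℕ, 1 ≤ i →
    jennings p G i =
      Subgroup.closure (S ∩ ((jennings p G i : Set G) \ (jennings p G (i + 1) : Set G)))
        ⊔ jennings p G (i + 1) ∧
    Nat.card (jennings p G i) =
      p ^ Nat.card (S ∩ ((jennings p G i : Set G) \ (jennings p G (i + 1) : Set G)) : Set G) *
        Nat.card (jennings p G (i + 1))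


open Subgroup Pointwise

section Helpers

variable {G : Type*} [Group G]

private lemma mem_normalizer_inf' {A B : Subgroup G} {g : G} (ha : g ∈ (Subgroup.normalizer (SetLike.coe A)))
    (hb : g ∈ (Subgroup.normalizer (SetLike.coe B))) : g ∈ (Subgroup.normalizer (SetLike.coe (A ⊓ B))) := by
  rw [Subgroup.mem_normalizer_iff] at ha hb ⊢
  intro h
  simp only [Subgroup.mem_inf]
  rw [ha h, hb h]

private lemma conj_mem_sup {A B : Subgroup G} {g : G} (ha : g ∈ (Subgroup.normalizer (SetLike.coe A)))
    (hb : g ∈ (Subgroup.normalizer (SetLike.coe B))) : ∀ h ∈ A ⊔ B, g * h * g⁻¹ ∈ A ⊔ B := by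
  intro h hh
  have hle : A ⊔ B ≤ Subgroup.comap (MulAut.conj g).toMonoidHom (A ⊔ B) := by
    refine sup_le ?_ ?_
    · intro a haa
      simp only [Subgroup.mem_comap, MulEquiv.coe_toMonoidHom, MulAut.conj_apply]
      exact Subgroup.mem_sup_left ((Subgroup.mem_normalizer_iff.mp ha a).mp haa)
    · intro b hbb
      simp only [Subgroup.mem_comap, MulEquiv.coe_toMonoidHom, MulAut.conj_apply]
      exact Subgroup.mem_sup_right ((Subgroup.mem_normalizer_iff.mp hb b).mp hbb)
  have := hle hh
  simpa only [Subgroup.mem_comap, MulEquiv.coe_toMonoidHom, MulAut.conj_apply] using this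

private lemma mem_normalizer_sup' {A B : Subgroup G} {g : G} (ha : g ∈ (Subgroup.normalizer (SetLike.coe A)))
    (hb : g ∈ (Subgroup.normalizer (SetLike.coe B))) : g ∈ (Subgroup.normalizer (SetLike.coe (A ⊔ B))) := by
  rw [Subgroup.mem_normalizer_iff]
  intro h
  constructor
  · exact fun hh => conj_mem_sup ha hb h hh
  · intro hh
    have := conj_mem_sup (inv_mem ha) (inv_mem hb) _ hh
    simpa [mul_assoc] using this

private lemma coe_sup_of_normalizer {W K : Subgroup G}
    (h : (K : Set G) ⊆ ((Subgroup.normalizer (SetLike.coe W)) : Set G)) :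
    ((W ⊔ K : Subgroup G) : Set G) = (W : Set G) * (K : Set G) := by
  have hP : ∃ P : Subgroup G, (P : Set G) = (W : Set G) * (K : Set G) := by
    refine ⟨{ carrier := (W : Set G) * (K : Set G),
              one_mem' := ⟨1, one_mem _, 1, one_mem _, by simp⟩,
              mul_mem' := ?_, inv_mem' := ?_ }, rfl⟩
    · rintro a b ⟨w, hw, k, hk, rfl⟩ ⟨w', hw', k', hk', rfl⟩
      refine ⟨w * (k * w' * k⁻¹), mul_mem hw ?_, k * k', mul_mem hk hk', by group⟩
      exact (Subgroup.mem_normalizer_iff.mp (h hk) w').mp hw'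
    · rintro a ⟨w, hw, k, hk, rfl⟩
      have hk' : (k : G)⁻¹ ∈ (Subgroup.normalizer (SetLike.coe W)) := inv_mem (h hk)
      have hm : k⁻¹ * w⁻¹ * k⁻¹⁻¹ ∈ W := (Subgroup.mem_normalizer_iff.mp hk' w⁻¹).mp (inv_mem hw)
      rw [inv_inv] at hm
      exact ⟨k⁻¹ * w⁻¹ * k, hm, k⁻¹, inv_mem hk, by group⟩
  obtain ⟨P, hPe⟩ := hP
  apply le_antisymm
  · have hle : W ⊔ K ≤ P := by
      refine sup_le ?_ ?_
      · intro w hw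
        rw [← SetLike.mem_coe, hPe]
        exact ⟨w, hw, 1, one_mem _, by simp⟩
      · intro k hk
        rw [← SetLike.mem_coe, hPe]
        exact ⟨1, one_mem _, k, hk, by simp⟩
    intro x hx
    rw [← hPe]
    exact hle hx
  · rintro x ⟨w, hw, k, hk, rfl⟩
    exact Subgroup.mul_mem_sup hw hk

end Helpers
section PChainDef

variable {G : Type*} [Group G]

/-- A chain of subgroups from `H` up to `K`, each step generated by one new element that
normalizes the previous stage and whose `p`-th power lies in it. -/
inductive PChain (p : ℕ) : Subgroup G → Subgroup G → List G → Prop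
  | nil (H : Subgroup G) : PChain p H H []
  | cons {H K : Subgroup G} {l : List G} {x : G} :
      PChain p H K l → x ∈ (Subgroup.normalizer (SetLike.coe K)) → x ∉ K → x ^ p ∈ K →
      PChain p H (K ⊔ Subgroup.closure {x}) (x :: l)

variable {p : ℕ}

lemma PChain.le {H K : Subgroup G} {l : List G} (h : PChain p H K l) : H ≤ K := by
  induction h with
  | nil => exact le_rfl
  | cons h hxn hx hxp ih => exact le_trans ih le_sup_left

lemma PChain.mem_top_not_bot {H K : Subgroup G} {l : List G} (h : PChain p H K l) :
    ∀ x ∈ l, x ∈ K ∧ x ∉ H := by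
  induction h with
  | nil => intro x hx; cases hx
  | cons h hxn hx hxp ih =>
    intro y hy
    rcases List.mem_cons.mp hy with rfl | hy
    · refine ⟨Subgroup.mem_sup_right (Subgroup.mem_closure_singleton_self y), fun hyH => hx (h.le hyH)⟩
    · exact ⟨Subgroup.mem_sup_left (ih y hy).1, (ih y hy).2⟩

lemma PChain.nodup {H K : Subgroup G} {l : List G} (h : PChain p H K l) : l.Nodup := by
  induction h with
  | nil => exact List.nodup_nil
  | cons h hxn hx hxp ih =>
    refine List.nodup_cons.mpr ⟨fun hmem => hx ?_, ih⟩
    exact (h.mem_top_not_bot _ hmem).1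

lemma PChain.closure_sup {H K : Subgroup G} {l : List G} (h : PChain p H K l) :
    H ⊔ Subgroup.closure {x | x ∈ l} = K := by
  induction h with
  | nil =>
    have : {x : G | x ∈ ([] : List G)} = (∅ : Set G) := by ext x; simp
    rw [this, Subgroup.closure_empty, sup_bot_eq]
  | @cons K l x h hxn hx hxp ih =>
    have hset : {y : G | y ∈ x :: l} = {x} ∪ {y : G | y ∈ l} := by ext y; simp [List.mem_cons]
    rw [hset, Subgroup.closure_union, ← sup_assoc, ← ih]
    rw [sup_assoc, sup_assoc, sup_comm (Subgroup.closure {x}) _]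

lemma PChain.append {M K : Subgroup G} {l₁ : List G} (h₁ : PChain p M K l₁) :
    ∀ {H : Subgroup G} {l₂ : List G}, PChain p H M l₂ → PChain p H K (l₁ ++ l₂) := by
  induction h₁ with
  | nil => intro H l₂ h₂; simpa using h₂
  | cons h hxn hx hxp ih =>
    intro H l₂ h₂
    exact PChain.cons (ih h₂) hxn hx hxp

end PChainDef
section PChainCard

variable {G : Type*} [Group G] [Finite G] {p : ℕ}

private lemma card_sup_closure_singleton (hp : p.Prime) {K : Subgroup G} {x : G}
    (hxn : x ∈ (Subgroup.normalizer (SetLike.coe K))) (hx : x ∉ K) (hxp : x ^ p ∈ K) :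
    Nat.card ↥(K ⊔ Subgroup.closure {x}) = p * Nat.card K := by
  set K' := K ⊔ Subgroup.closure {x} with hK'
  have hKK' : K ≤ K' := le_sup_left
  have hxK' : x ∈ K' := Subgroup.mem_sup_right (Subgroup.mem_closure_singleton_self x)
  have hK'norm : K' ≤ (Subgroup.normalizer (SetLike.coe K)) := by
    refine sup_le Subgroup.le_normalizer ?_
    rw [Subgroup.closure_le]
    intro y hy
    rcases hy with rfl
    exact hxn
  set L := K.subgroupOf K' with hL
  haveI hLnormal : L.Normal := by
    constructor
    intro n hn g
    have h1 : (g : G) ∈ (Subgroup.normalizer (SetLike.coe K)) := hK'norm g.2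
    have h2 : (n : G) ∈ K := hn
    have := (Subgroup.mem_normalizer_iff.mp h1 (n : G)).mp h2
    simpa [hL, Subgroup.mem_subgroupOf] using this
  set xk : ↥K' := ⟨x, hxK'⟩ with hxk
  set t : ↥K' ⧸ L := QuotientGroup.mk xk with ht
  have ht1 : t ≠ 1 := by
    intro hone
    rw [ht, QuotientGroup.eq_one_iff] at hone
    exact hx (by simpa [hL, Subgroup.mem_subgroupOf] using hone)
  have htp : t ^ p = 1 := by
    rw [ht, ← QuotientGroup.mk_pow, QuotientGroup.eq_one_iff]
    simpa [hL, Subgroup.mem_subgroupOf] using hxp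
  haveI : Fact p.Prime := ⟨hp⟩
  have horder : orderOf t = p := orderOf_eq_prime htp ht1
  -- generation : the quotient is generated by t
  have hgen : L ⊔ Subgroup.closure {xk} = (⊤ : Subgroup ↥K') := by
    apply Subgroup.map_injective K'.subtype_injective
    rw [Subgroup.map_sup, Subgroup.subgroupOf_map_subtype, MonoidHom.map_closure]
    have him : (K'.subtype '' {xk}) = {x} := by
      ext y; simp [hxk]
    rw [him, inf_of_le_left hKK']
    have h1 : Subgroup.map K'.subtype ⊤ = K' := by
      ext y
      simp only [Subgroup.mem_map, Subgroup.mem_top, true_and, Subgroup.coe_subtype]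
      constructor
      · rintro ⟨z, rfl⟩; exact z.2
      · intro hy; exact ⟨⟨y, hy⟩, rfl⟩
    rw [h1]
  have htop : (Subgroup.zpowers t : Subgroup (↥K' ⧸ L)) = ⊤ := by
    rw [eq_top_iff]
    intro q _
    obtain ⟨g, rfl⟩ := QuotientGroup.mk_surjective q
    have hg : g ∈ Subgroup.comap (QuotientGroup.mk' L) (Subgroup.zpowers t) := by
      have : (⊤ : Subgroup ↥K') ≤ Subgroup.comap (QuotientGroup.mk' L) (Subgroup.zpowers t) := by
        rw [← hgen]
        refine sup_le ?_ ?_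
        · intro g hg
          simp only [Subgroup.mem_comap]
          have : (QuotientGroup.mk' L) g = 1 := (QuotientGroup.eq_one_iff g).mpr hg
          rw [this]; exact one_mem _
        · rw [Subgroup.closure_le]
          intro y hy
          rcases hy with rfl
          simp only [SetLike.mem_coe, Subgroup.mem_comap]
          exact Subgroup.mem_zpowers _
      exact this trivial
    simpa using hg
  have hcardQ : Nat.card (↥K' ⧸ L) = p := by
    rw [← horder, ← Nat.card_zpowers, htop, Subgroup.card_top]
  have hcardL : Nat.card L = Nat.card K :=
    Nat.card_congr (Subgroup.subgroupOfEquivOfLe hKK').toEquiv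
  calc Nat.card ↥K' = Nat.card (↥K' ⧸ L) * Nat.card L :=
        Subgroup.card_eq_card_quotient_mul_card_subgroup L
    _ = p * Nat.card K := by rw [hcardQ, hcardL]

lemma PChain.card (hp : p.Prime) {H K : Subgroup G} {l : List G} (h : PChain p H K l) :
    Nat.card K = p ^ l.length * Nat.card H := by
  induction h with
  | nil => simp
  | @cons K l x h hxn hx hxp ih =>
    rw [card_sup_closure_singleton hp hxn hx hxp, ih, List.length_cons, pow_succ]
    ring

lemma PChain.card_set {H K : Subgroup G} {l : List G} (h : PChain p H K l) :
    Nat.card {x | x ∈ l} = l.length := by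
  classical
  have : {x | x ∈ l} = (l.toFinset : Set G) := by ext y; simp
  rw [this, Nat.card_coe_set_eq, Set.ncard_coe_finset, List.toFinset_card_of_nodup h.nodup]

end PChainCard
section PChainExists

variable {p : ℕ}

private lemma exists_pstep {G : Type*} [Group G] [Finite G] (hp : p.Prime)
    (hG : IsPGroup p G) {H K : Subgroup G} (hlt : H < K) :
    ∃ x : G, x ∈ K ∧ x ∉ H ∧ x ∈ (Subgroup.normalizer (SetLike.coe H)) ∧ x ^ p ∈ H := by
  haveI : Fact p.Prime := ⟨hp⟩
  set L := H.subgroupOf K with hLdef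
  have hHK : H ≤ K := hlt.le
  have hLtop : L < ⊤ := by
    rcases lt_iff_le_and_ne.mp hlt with ⟨hle, hne⟩
    refine lt_of_le_of_ne le_top ?_
    intro htop
    have : K ≤ H := (Subgroup.subgroupOf_eq_top).mp htop
    exact hne (le_antisymm hle this)
  haveI : Group.IsNilpotent ↥K := (hG.to_subgroup K).isNilpotent
  have hNC : L < (Subgroup.normalizer (SetLike.coe L)) := normalizerCondition_of_isNilpotent L hLtop
  -- quotient of the normalizer by L
  haveI : (L.subgroupOf (Subgroup.normalizer (SetLike.coe L))).Normal := Subgroup.normal_in_normalizer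
  have hQp : IsPGroup p (↥(Subgroup.normalizer (SetLike.coe L)) ⧸ L.subgroupOf (Subgroup.normalizer (SetLike.coe L))) :=
    ((hG.to_subgroup K).to_subgroup (Subgroup.normalizer (SetLike.coe L))).to_quotient _
  obtain ⟨u, huN, huL⟩ := SetLike.exists_of_lt hNC
  set u' : ↥(Subgroup.normalizer (SetLike.coe L)) := ⟨u, huN⟩ with hu'
  set q : ↥(Subgroup.normalizer (SetLike.coe L)) ⧸ L.subgroupOf (Subgroup.normalizer (SetLike.coe L)) := QuotientGroup.mk u' with hq
  have hq1 : q ≠ 1 := by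
    intro hone
    rw [hq, QuotientGroup.eq_one_iff] at hone
    exact huL (by simpa [Subgroup.mem_subgroupOf] using hone)
  obtain ⟨k, hk⟩ := hQp q
  have hk0 : k ≠ 0 := by rintro rfl; simp at hk; exact hq1 hk
  -- minimal exponent
  have hex : ∃ m, q ^ p ^ m = 1 := ⟨k, hk⟩
  classical
  set k₀ := Nat.find hex with hk₀
  have hk₀spec : q ^ p ^ k₀ = 1 := Nat.find_spec hex
  have hk₀pos : 0 < k₀ := by
    rcases Nat.eq_zero_or_pos k₀ with h0 | h
    · exfalso; apply hq1; have := hk₀spec; rw [h0] at this; simpa using this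
    · exact h
  set v : ↥(Subgroup.normalizer (SetLike.coe L)) := u' ^ p ^ (k₀ - 1) with hv
  have hrv : (QuotientGroup.mk v : ↥(Subgroup.normalizer (SetLike.coe L)) ⧸ L.subgroupOf (Subgroup.normalizer (SetLike.coe L))) = q ^ p ^ (k₀ - 1) := by
    rw [hv]; simp [hq]
  have hr1 : q ^ p ^ (k₀ - 1) ≠ 1 := Nat.find_min hex (by omega)
  have hrp : (q ^ p ^ (k₀ - 1)) ^ p = 1 := by
    rw [← pow_mul, ← pow_succ]
    have : k₀ - 1 + 1 = k₀ := by omega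
    rw [this]; exact hk₀spec
  have hvL : v ∉ L.subgroupOf (Subgroup.normalizer (SetLike.coe L)) := by
    intro hmem
    exact hr1 (by rw [← hrv, QuotientGroup.eq_one_iff]; exact hmem)
  have hvpL : v ^ p ∈ L.subgroupOf (Subgroup.normalizer (SetLike.coe L)) := by
    have : (QuotientGroup.mk (v ^ p) : ↥(Subgroup.normalizer (SetLike.coe L)) ⧸ L.subgroupOf (Subgroup.normalizer (SetLike.coe L))) = 1 := by
      rw [QuotientGroup.mk_pow]
      rw [hrv]; exact hrp
    rwa [QuotientGroup.eq_one_iff] at this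
  -- now descend to G
  set w : ↥K := (v : ↥K) with hw
  have hwnorm : w ∈ (Subgroup.normalizer (SetLike.coe L)) := v.2
  have hwL : w ∉ L := by simpa [Subgroup.mem_subgroupOf] using hvL
  have hwpL : w ^ p ∈ L := by
    have := hvpL
    simpa [Subgroup.mem_subgroupOf] using this
  refine ⟨(w : G), w.2, ?_, ?_, ?_⟩
  · intro hmem
    exact hwL (by simpa [hLdef, Subgroup.mem_subgroupOf] using hmem)
  · rw [Subgroup.mem_normalizer_iff]
    intro h
    constructor
    · intro hh
      have hhK : h ∈ K := hHK hh
      have hmem : (⟨h, hhK⟩ : ↥K) ∈ L := by simpa [hLdef, Subgroup.mem_subgroupOf] using hh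
      have := (Subgroup.mem_normalizer_iff.mp hwnorm ⟨h, hhK⟩).mp hmem
      simpa [hLdef, Subgroup.mem_subgroupOf] using this
    · intro hh
      have hcK : (w : G) * h * (w : G)⁻¹ ∈ K := hHK hh
      have hhK : h ∈ K := by
        have : h = (w : G)⁻¹ * ((w : G) * h * (w : G)⁻¹) * (w : G) := by group
        rw [this]
        exact mul_mem (mul_mem (inv_mem w.2) hcK) w.2
      have hmemc : w * ⟨h, hhK⟩ * w⁻¹ ∈ L := by
        have hcoe : ((w * ⟨h, hhK⟩ * w⁻¹ : ↥K) : G) = (w : G) * h * (w : G)⁻¹ := by norm_cast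
        simp only [hLdef, Subgroup.mem_subgroupOf, hcoe]
        exact hh
      have := (Subgroup.mem_normalizer_iff.mp hwnorm ⟨h, hhK⟩).mpr hmemc
      simpa [hLdef, Subgroup.mem_subgroupOf] using this
  · have : ((w ^ p : ↥K) : G) = (w : G) ^ p := by norm_cast
    have := hwpL
    simpa [hLdef, Subgroup.mem_subgroupOf] using this

lemma PChain.exists_chain {G : Type*} [Group G] [Finite G] (hp : p.Prime)
    (hG : IsPGroup p G) {H K : Subgroup G} (hHK : H ≤ K) : ∃ l : List G, PChain p H K l := by
  haveI : Fact p.Prime := ⟨hp⟩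
  suffices h : ∀ n (H K : Subgroup G), H ≤ K → Nat.card K - Nat.card H ≤ n →
      ∃ l : List G, PChain p H K l by
    exact h (Nat.card K - Nat.card H) H K hHK le_rfl
  intro n
  induction n with
  | zero =>
    intro H K hle hcard
    have : Nat.card K ≤ Nat.card H := by
      have hpos : 0 < Nat.card H := Nat.card_pos
      omega
    have : H = K := Subgroup.eq_of_le_of_card_ge hle this
    exact ⟨[], this ▸ PChain.nil H⟩
  | succ n ih =>
    intro H K hle hcard
    rcases eq_or_lt_of_le hle with heq | hlt
    · exact ⟨[], heq ▸ PChain.nil H⟩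
    · obtain ⟨x, hxK, hxH, hxn, hxp⟩ := exists_pstep hp hG hlt
      set H' := H ⊔ Subgroup.closure {x} with hH'
      have hchain1 : PChain p H H' [x] := PChain.cons (PChain.nil H) hxn hxH hxp
      have hH'K : H' ≤ K := sup_le hle (by rw [Subgroup.closure_le]; intro y hy; rcases hy with rfl; exact hxK)
      have hcard' : Nat.card H' = p * Nat.card H := card_sup_closure_singleton hp hxn hxH hxp
      have hHpos : 0 < Nat.card H := Nat.card_pos
      have hp2 : 2 ≤ p := hp.two_le
      have hmono : Nat.card H' ≤ Nat.card K := Subgroup.card_le_of_le hH'K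
      have : Nat.card K - Nat.card H' ≤ n := by
        have : Nat.card H + 1 ≤ Nat.card H' := by nlinarith
        omega
      obtain ⟨l', hl'⟩ := ih H' K hH'K this
      exact ⟨l' ++ [x], hl'.append hchain1⟩

end PChainExists
section PChainSup

variable {G : Type*} [Group G] {p : ℕ}

/-- Transfer a chain along `W ⊔ ·`. -/
lemma PChain.sup_left {H K W : Subgroup G} {l : List G} (hc : PChain p H K l)
    (hnorm : (K : Set G) ⊆ ((Subgroup.normalizer (SetLike.coe W)) : Set G)) (hint : W ⊓ K ≤ H) :
    PChain p (W ⊔ H) (W ⊔ K) l := by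
  induction hc with
  | nil => exact PChain.nil _
  | @cons K l x hc hxn hx hxp ih =>
    have hKK' : K ≤ K ⊔ Subgroup.closure {x} := le_sup_left
    have hxK' : x ∈ K ⊔ Subgroup.closure {x} :=
      Subgroup.mem_sup_right (Subgroup.mem_closure_singleton_self x)
    have hnormK : (K : Set G) ⊆ ((Subgroup.normalizer (SetLike.coe W)) : Set G) := fun g hg => hnorm (hKK' hg)
    have hintK : W ⊓ K ≤ H := le_trans (inf_le_inf_left W hKK') hint
    have ihc : PChain p (W ⊔ H) (W ⊔ K) l := ih hnormK hintK
    have hxnorm : x ∈ (Subgroup.normalizer (SetLike.coe (W ⊔ K))) :=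
      mem_normalizer_sup' (hnorm hxK') hxn
    have hxnot : x ∉ W ⊔ K := by
      intro hmem
      have : x ∈ (W : Set G) * (K : Set G) := by
        rw [← coe_sup_of_normalizer hnormK]
        exact hmem
      obtain ⟨w, hw0, k, hk0, hwk⟩ := this
      have hw : w ∈ W := hw0
      have hk : k ∈ K := hk0
      have hwmem : w ∈ W ⊓ (K ⊔ Subgroup.closure {x}) := by
        refine Subgroup.mem_inf.mpr ⟨hw, ?_⟩
        have hweq : w = x * k⁻¹ := by rw [← hwk]; group
        rw [hweq]
        exact mul_mem hxK' (inv_mem (hKK' hk))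
      have hwH : w ∈ H := hint hwmem
      have hwK : w ∈ K := hc.le hwH
      apply hx
      rw [← hwk]
      exact mul_mem hwK hk
    have hxpmem : x ^ p ∈ W ⊔ K := Subgroup.mem_sup_right hxp
    have := PChain.cons ihc hxnorm hxnot hxpmem
    rwa [sup_assoc] at this

end PChainSup
section JenningsBasic

variable {p : ℕ} {G : Type*} [Group G]

lemma jennings_antitone (p : ℕ) (G : Type*) [Group G] : Antitone (jennings p G) := by
  intro m n hmn
  refine iSup_le fun i => iSup_le fun j => iSup_le fun hcond => ?_
  exact le_iSup_of_le i (le_iSup_of_le j (le_iSup_of_le (le_trans hmn hcond) le_rfl))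

lemma jennings_one (p : ℕ) (G : Type*) [Group G] : jennings p G 1 = ⊤ := by
  rw [eq_top_iff]
  have hcond : 1 ≤ (0 + 1) * p ^ 0 := by simp
  refine le_trans ?_ (le_iSup_of_le 0 (le_iSup_of_le 0 (le_iSup_of_le hcond le_rfl)))
  intro x _
  apply Subgroup.subset_closure
  exact ⟨x, by simp [Subgroup.lowerCentralSeries_zero], by simp⟩

lemma jennings_normal (p : ℕ) (G : Type*) [Group G] (n : ℕ) : (jennings p G n).Normal := by
  constructor
  intro x hx g
  have hmap : ∀ g : G, (jennings p G n).map (MulAut.conj g).toMonoidHom ≤ jennings p G n := by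
    intro g
    unfold jennings
    rw [Subgroup.map_iSup]
    refine iSup_le fun i => ?_
    rw [Subgroup.map_iSup]
    refine iSup_le fun j => ?_
    rw [Subgroup.map_iSup]
    refine iSup_le fun hcond => ?_
    rw [MonoidHom.map_closure]
    refine le_iSup_of_le i (le_iSup_of_le j (le_iSup_of_le hcond ?_))
    apply Subgroup.closure_mono
    rintro z ⟨y, ⟨w, hw, rfl⟩, rfl⟩
    refine ⟨g * w * g⁻¹, Subgroup.Normal.conj_mem (lowerCentralSeries_normal _ _) w hw g, ?_⟩
    rw [map_pow]
    simp [MulAut.conj_apply]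
  exact hmap g (Subgroup.mem_map_of_mem _ hx)

lemma jennings_map_subtype_le (p : ℕ) (N : Subgroup G) (n : ℕ) :
    (jennings p ↥N n).map N.subtype ≤ jennings p G n := by
  rw [Subgroup.map_le_iff_le_comap]
  refine iSup_le fun i => iSup_le fun j => iSup_le fun hcond => ?_
  rw [Subgroup.closure_le]
  rintro x ⟨y, hy, rfl⟩
  simp only [SetLike.mem_coe, Subgroup.mem_comap]
  have hyG : (y : G) ∈ (⊤ : Subgroup G).lowerCentralSeries i :=
    Subgroup.lowerCentralSeries_map_subtype_le N i ⟨y, hy, rfl⟩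
  have hle : Subgroup.closure {x : G | ∃ y ∈ (⊤ : Subgroup G).lowerCentralSeries i, x = y ^ p ^ j} ≤ jennings p G n :=
    le_iSup_of_le i (le_iSup_of_le j (le_iSup_of_le hcond le_rfl))
  apply hle
  apply Subgroup.subset_closure
  exact ⟨(y : G), hyG, by push_cast; rfl⟩

lemma jennings_eventually_bot (hp : p.Prime) [Finite G] (hG : IsPGroup p G) :
    ∃ B : ℕ, 0 < B ∧ ∀ n, B ≤ n → jennings p G n = ⊥ := by
  haveI : Fact p.Prime := ⟨hp⟩
  obtain ⟨c, hc⟩ := Subgroup.nilpotent_iff_lowerCentralSeries.mp hG.isNilpotent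
  obtain ⟨s, hs⟩ := IsPGroup.iff_card.mp hG
  refine ⟨c * p ^ s + 1, by omega, fun n hn => ?_⟩
  rw [eq_bot_iff]
  refine iSup_le fun i => iSup_le fun j => iSup_le fun hcond => ?_
  rw [Subgroup.closure_le]
  rintro x ⟨y, hy, rfl⟩
  simp only [SetLike.mem_coe]
  rcases le_or_gt c i with hci | hic
  · have : y ∈ (⊤ : Subgroup G).lowerCentralSeries c := Subgroup.lowerCentralSeries_antitone ⊤ hci hy
    rw [hc] at this
    rcases Subgroup.mem_bot.mp this with rfl
    simp [Subgroup.mem_bot]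
  · -- i < c, so p ^ s ∣ p ^ j
    have h1 : c * p ^ j ≥ (i + 1) * p ^ j := by
      have : i + 1 ≤ c := hic
      exact Nat.mul_le_mul_right _ this
    have h2 : c * p ^ j ≥ c * p ^ s + 1 := le_trans (le_trans hn hcond) h1
    have h3 : p ^ s < p ^ j := by
      by_contra hle
      push_neg at hle
      have := Nat.mul_le_mul_left c hle
      omega
    have hsj : s ≤ j := by
      by_contra hlt
      push_neg at hlt
      exact absurd (Nat.pow_le_pow_right hp.one_lt.le hlt.le) (not_le.mpr h3)
    have : y ^ p ^ j = 1 := by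
      have hcard : y ^ Nat.card G = 1 := pow_card_eq_one'
      have : p ^ j = p ^ s * p ^ (j - s) := by rw [← pow_add]; congr 1; omega
      rw [this, pow_mul, ← hs, hcard, one_pow]
    rw [this]
    exact Subgroup.mem_bot.mpr rfl

end JenningsBasic
section Main

variable {G : Type*} [Group G] {p : ℕ}

/-- image in `G` of the Jennings series of `N` -/
private def MN (p : ℕ) (N : Subgroup G) (k : ℕ) : Subgroup G :=
  (jennings p ↥N k).map N.subtype

private def AA (p : ℕ) (N : Subgroup G) (k i : ℕ) : Subgroup G :=
  MN p N k ⊓ jennings p G i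

private def Yk (p : ℕ) (N : Subgroup G) (k i : ℕ) : Subgroup G :=
  MN p N (k + 1) ⊔ AA p N k i

private def CC (p : ℕ) (N : Subgroup G) (k i : ℕ) : Subgroup G :=
  AA p N k i ⊓ Yk p N k (i + 1)

private def Xc (p : ℕ) (N : Subgroup G) (k i : ℕ) : Subgroup G :=
  AA p N k i ⊔ jennings p G (i + 1)

variable (N : Subgroup G)

private lemma MN_le_N (k : ℕ) : MN p N k ≤ N := Subgroup.map_subtype_le _

private lemma MN_anti {a b : ℕ} (h : a ≤ b) : MN p N b ≤ MN p N a :=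
  Subgroup.map_mono (jennings_antitone p ↥N h)

private lemma MN_le_jennings (k : ℕ) : MN p N k ≤ jennings p G k :=
  jennings_map_subtype_le p N k

private lemma MN_one : MN p N 1 = N := by
  unfold MN
  rw [jennings_one]
  ext y
  simp only [Subgroup.mem_map, Subgroup.mem_top, true_and, Subgroup.coe_subtype]
  constructor
  · rintro ⟨z, rfl⟩; exact z.2
  · intro hy; exact ⟨⟨y, hy⟩, rfl⟩

private lemma mem_normalizer_MN {g : G} (hg : g ∈ N) (k : ℕ) :
    g ∈ (Subgroup.normalizer (SetLike.coe (MN p N k))) := by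
  have hJ : (jennings p ↥N k).Normal := jennings_normal p ↥N k
  rw [Subgroup.mem_normalizer_iff]
  intro h
  constructor
  · rintro ⟨y, hy, rfl⟩
    exact ⟨⟨g, hg⟩ * y * ⟨g, hg⟩⁻¹, hJ.conj_mem y hy ⟨g, hg⟩, by push_cast; simp⟩
  · rintro ⟨z, hz, hzeq⟩
    refine ⟨⟨g, hg⟩⁻¹ * z * ⟨g, hg⟩, ?_, ?_⟩
    · have := hJ.conj_mem z hz ⟨g, hg⟩⁻¹
      simpa using this
    · show ((⟨g, hg⟩⁻¹ * z * ⟨g, hg⟩ : ↥N) : G) = h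
      have hzg : (z : G) = g * h * g⁻¹ := hzeq
      push_cast
      rw [hzg]
      group

private lemma mem_normalizer_jennings (g : G) (n : ℕ) : g ∈ (Subgroup.normalizer (SetLike.coe (jennings p G n))) := by
  have := jennings_normal p G n
  rw [Subgroup.normalizer_eq_top_iff.mpr this]
  trivial

private lemma mem_normalizer_AA {g : G} (hg : g ∈ N) (k i : ℕ) :
    g ∈ (Subgroup.normalizer (SetLike.coe (AA p N k i))) :=
  mem_normalizer_inf' (mem_normalizer_MN N hg k) (mem_normalizer_jennings g i)

private lemma mem_normalizer_Yk {g : G} (hg : g ∈ N) (k i : ℕ) :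
    g ∈ (Subgroup.normalizer (SetLike.coe (Yk p N k i))) :=
  mem_normalizer_sup' (mem_normalizer_MN N hg (k + 1)) (mem_normalizer_AA N hg k i)

private lemma mem_normalizer_Xc {g : G} (hg : g ∈ N) (k i : ℕ) :
    g ∈ (Subgroup.normalizer (SetLike.coe (Xc p N k i))) :=
  mem_normalizer_sup' (mem_normalizer_AA N hg k i) (mem_normalizer_jennings g (i + 1))

private lemma AA_le_N (k i : ℕ) : AA p N k i ≤ N := le_trans inf_le_left (MN_le_N N k)

private lemma AA_anti_i (k : ℕ) {a b : ℕ} (h : a ≤ b) : AA p N k b ≤ AA p N k a :=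
  inf_le_inf le_rfl (jennings_antitone p G h)

private lemma AA_anti_k {a b : ℕ} (h : a ≤ b) (i : ℕ) : AA p N b i ≤ AA p N a i :=
  inf_le_inf (MN_anti N h) le_rfl

/-- decomposition of `Yk k (i+1)` as a set product -/
private lemma coe_Yk_succ (k i : ℕ) :
    ((Yk p N k (i + 1) : Subgroup G) : Set G) = (MN p N (k + 1) : Set G) * (AA p N k (i + 1) : Set G) := by
  apply coe_sup_of_normalizer
  intro g hg
  exact mem_normalizer_MN N (AA_le_N N k (i + 1) hg) (k + 1)

/-- decomposition of `Xc (k+1) i` as a set product -/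
private lemma coe_Xc_succ (k i : ℕ) :
    ((Xc p N (k + 1) i : Subgroup G) : Set G) =
      (AA p N (k + 1) i : Set G) * (jennings p G (i + 1) : Set G) := by
  haveI := jennings_normal p G (i + 1)
  exact Subgroup.mul_normal _ _

/-- Key lemma: `Xc (k+1) i ⊓ AA k i ≤ CC k i`. -/
private lemma key_inf_le (k i : ℕ) : Xc p N (k + 1) i ⊓ AA p N k i ≤ CC p N k i := by
  intro x hx
  obtain ⟨hx2, hx1⟩ := Subgroup.mem_inf.mp hx
  have hxset : x ∈ (AA p N (k + 1) i : Set G) * (jennings p G (i + 1) : Set G) := by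
    rw [← coe_Xc_succ]; exact hx2
  obtain ⟨v, hv0, d, hd0, hvd⟩ := hxset
  have hv : v ∈ AA p N (k + 1) i := hv0
  have hd : d ∈ jennings p G (i + 1) := hd0
  have hxMk : x ∈ MN p N k := (Subgroup.mem_inf.mp hx1).1
  have hvMk : v ∈ MN p N k := MN_anti N (Nat.le_succ k) (Subgroup.mem_inf.mp hv).1
  have hdmem : d ∈ MN p N k ⊓ jennings p G (i + 1) := by
    refine Subgroup.mem_inf.mpr ⟨?_, hd⟩
    have : d = v⁻¹ * x := by rw [← hvd]; group
    rw [this]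
    exact mul_mem (inv_mem hvMk) hxMk
  refine Subgroup.mem_inf.mpr ⟨hx1, ?_⟩
  rw [← hvd]
  exact Subgroup.mul_mem_sup ((Subgroup.mem_inf.mp hv).1) hdmem

/-- `CC k i ≤ Xc (k+1) i`. -/
private lemma CC_le_Xc (k i : ℕ) : CC p N k i ≤ Xc p N (k + 1) i := by
  intro x hx
  obtain ⟨hx1, hx2⟩ := Subgroup.mem_inf.mp hx
  have hxset : x ∈ (MN p N (k + 1) : Set G) * (AA p N k (i + 1) : Set G) := by
    rw [← coe_Yk_succ]; exact hx2
  obtain ⟨w, hw0, u, hu0, hwu⟩ := hxset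
  have hw : w ∈ MN p N (k + 1) := hw0
  have hu : u ∈ AA p N k (i + 1) := hu0
  have hwA : w ∈ AA p N (k + 1) i := by
    refine Subgroup.mem_inf.mpr ⟨hw, ?_⟩
    have : w = x * u⁻¹ := by rw [← hwu]; group
    rw [this]
    have hxDG : x ∈ jennings p G i := (Subgroup.mem_inf.mp hx1).2
    have huDG : u ∈ jennings p G i :=
      jennings_antitone p G (Nat.le_succ i) (Subgroup.mem_inf.mp hu).2
    exact mul_mem hxDG (inv_mem huDG)
  rw [← hwu]
  exact Subgroup.mul_mem_sup hwA (Subgroup.mem_inf.mp hu).2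

end Main
section Chains

variable {G : Type*} [Group G] {p : ℕ}

private lemma Xc_sup_AA (N : Subgroup G) (k i : ℕ) :
    Xc p N (k + 1) i ⊔ AA p N k i = Xc p N k i := by
  show (AA p N (k + 1) i ⊔ jennings p G (i + 1)) ⊔ AA p N k i
      = AA p N k i ⊔ jennings p G (i + 1)
  rw [sup_comm (AA p N (k + 1) i) (jennings p G (i + 1)), sup_assoc,
    sup_eq_right.mpr (AA_anti_k N (Nat.le_succ k) i), sup_comm]

private lemma Yk_sup_AA (N : Subgroup G) (k i : ℕ) :
    Yk p N k (i + 1) ⊔ AA p N k i = Yk p N k i := by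
  show (MN p N (k + 1) ⊔ AA p N k (i + 1)) ⊔ AA p N k i = MN p N (k + 1) ⊔ AA p N k i
  rw [sup_assoc, sup_eq_right.mpr (AA_anti_i N k (Nat.le_succ i))]

private lemma chainX (N : Subgroup G) {k i : ℕ} {l : List G}
    (hl : PChain p (CC p N k i) (AA p N k i) l) :
    PChain p (Xc p N (k + 1) i) (Xc p N k i) l := by
  have h := hl.sup_left (W := Xc p N (k + 1) i)
    (fun g hg => mem_normalizer_Xc N (AA_le_N N k i hg) (k + 1) i)
    (key_inf_le N k i)
  rwa [sup_eq_left.mpr (CC_le_Xc N k i), Xc_sup_AA] at h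

private lemma chainY (N : Subgroup G) {k i : ℕ} {l : List G}
    (hl : PChain p (CC p N k i) (AA p N k i) l) :
    PChain p (Yk p N k (i + 1)) (Yk p N k i) l := by
  have h := hl.sup_left (W := Yk p N k (i + 1))
    (fun g hg => mem_normalizer_Yk N (AA_le_N N k i hg) k (i + 1))
    (le_of_eq (inf_comm _ _))
  rwa [sup_eq_left.mpr inf_le_right, Yk_sup_AA] at h

private lemma exists_concatX (N : Subgroup G) (ℓ : ℕ → ℕ → List G)
    (hℓ : ∀ k i, PChain p (CC p N k i) (AA p N k i) (ℓ k i)) (B i : ℕ) :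
    ∀ d k, k + d = B → ∃ lX : List G, PChain p (Xc p N B i) (Xc p N k i) lX ∧
      ∀ x, x ∈ lX ↔ ∃ k', k ≤ k' ∧ k' < B ∧ x ∈ ℓ k' i := by
  intro d
  induction d with
  | zero =>
    intro k hk
    subst hk
    exact ⟨[], PChain.nil _, by simp; omega⟩
  | succ d ih =>
    intro k hk
    obtain ⟨l', hl', hmem'⟩ := ih (k + 1) (by omega)
    refine ⟨ℓ k i ++ l', (chainX N (hℓ k i)).append hl', ?_⟩
    · intro x
      simp only [List.mem_append, hmem']
      constructor
      · rintro (hx | ⟨k', h1, h2, h3⟩)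
        · exact ⟨k, le_rfl, by omega, hx⟩
        · exact ⟨k', by omega, h2, h3⟩
      · rintro ⟨k', h1, h2, h3⟩
        rcases eq_or_lt_of_le h1 with rfl | hlt
        · exact Or.inl h3
        · exact Or.inr ⟨k', by omega, h2, h3⟩

private lemma exists_concatY (N : Subgroup G) (ℓ : ℕ → ℕ → List G)
    (hℓ : ∀ k i, PChain p (CC p N k i) (AA p N k i) (ℓ k i)) (B k : ℕ) :
    ∀ d i, i + d = B → ∃ lY : List G, PChain p (Yk p N k B) (Yk p N k i) lY ∧
      ∀ x, x ∈ lY ↔ ∃ i', i ≤ i' ∧ i' < B ∧ x ∈ ℓ k i' := by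
  intro d
  induction d with
  | zero =>
    intro i hi
    subst hi
    exact ⟨[], PChain.nil _, by simp; omega⟩
  | succ d ih =>
    intro i hi
    obtain ⟨l', hl', hmem'⟩ := ih (i + 1) (by omega)
    refine ⟨ℓ k i ++ l', (chainY N (hℓ k i)).append hl', ?_⟩
    · intro x
      simp only [List.mem_append, hmem']
      constructor
      · rintro (hx | ⟨i', h1, h2, h3⟩)
        · exact ⟨i, le_rfl, by omega, hx⟩
        · exact ⟨i', by omega, h2, h3⟩
      · rintro ⟨i', h1, h2, h3⟩
        rcases eq_or_lt_of_le h1 with rfl | hlt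
        · exact Or.inl h3
        · exact Or.inr ⟨i', by omega, h2, h3⟩

end Chains

/-- For a finite `p`-group `G` and a normal subgroup `N`, there is a
Jennings set `S` of `G` such that `N ∩ S` is a Jennings set of `N`. -/
theorem exists_jenningsSet_compatible (p : ℕ) (hp : p.Prime)
    (G : Type*) [Group G] [Finite G] (hG : ∃ s : ℕ, Nat.card G = p ^ s)
    (N : Subgroup G) [N.Normal] :
    ∃ S : Set G, IsJenningsSet p S ∧ IsJenningsSet p {x : ↥N | (x : G) ∈ S} := by
  classical
  haveI : Fact p.Prime := ⟨hp⟩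
  have hPG : IsPGroup p G := IsPGroup.iff_card.mpr hG
  obtain ⟨B₁, hB₁pos, hB₁⟩ := jennings_eventually_bot hp hPG
  obtain ⟨B₂, hB₂pos, hB₂⟩ := jennings_eventually_bot (G := ↥N) hp (hPG.to_subgroup N)
  set B := max B₁ B₂ with hB
  have hBpos : 1 ≤ B := le_trans hB₁pos (le_max_left _ _)
  have hDGB : ∀ m, B ≤ m → jennings p G m = ⊥ := fun m hm =>
    hB₁ m (le_trans (le_max_left _ _) hm)
  have hjNB : ∀ m, B ≤ m → jennings p ↥N m = ⊥ := fun m hm =>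
    hB₂ m (le_trans (le_max_right _ _) hm)
  have hMB : ∀ m, B ≤ m → MN p N m = ⊥ := by
    intro m hm
    show (jennings p ↥N m).map N.subtype = ⊥
    rw [hjNB m hm]
    exact Subgroup.map_bot _
  -- base chains
  have hCCle : ∀ k i : ℕ, CC p N k i ≤ AA p N k i := fun k i => inf_le_left
  choose ℓ hℓ using fun k i : ℕ => PChain.exists_chain hp hPG (hCCle k i)
  -- membership facts for the base chains
  have hmemA : ∀ k i x, x ∈ ℓ k i → x ∈ AA p N k i :=
    fun k i x hx => ((hℓ k i).mem_top_not_bot x hx).1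
  have hnotCC : ∀ k i x, x ∈ ℓ k i → x ∉ CC p N k i :=
    fun k i x hx => ((hℓ k i).mem_top_not_bot x hx).2
  have hmemN : ∀ k i x, x ∈ ℓ k i → x ∈ N :=
    fun k i x hx => AA_le_N N k i (hmemA k i x hx)
  have hmemM : ∀ k i x, x ∈ ℓ k i → x ∈ MN p N k :=
    fun k i x hx => (Subgroup.mem_inf.mp (hmemA k i x hx)).1
  have hmemDG : ∀ k i x, x ∈ ℓ k i → x ∈ jennings p G i :=
    fun k i x hx => (Subgroup.mem_inf.mp (hmemA k i x hx)).2
  have hnotM : ∀ k i x, x ∈ ℓ k i → x ∉ MN p N (k + 1) := by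
    intro k i x hx hmem
    exact hnotCC k i x hx
      (Subgroup.mem_inf.mpr ⟨hmemA k i x hx, Subgroup.mem_sup_left hmem⟩)
  have hnotDG : ∀ k i x, x ∈ ℓ k i → x ∉ jennings p G (i + 1) := by
    intro k i x hx hmem
    apply hnotCC k i x hx
    exact Subgroup.mem_inf.mpr ⟨hmemA k i x hx,
      Subgroup.mem_sup_right (Subgroup.mem_inf.mpr ⟨hmemM k i x hx, hmem⟩)⟩
  -- G-side concatenated chains
  have hXB : ∀ i, Xc p N B i = jennings p G (i + 1) := by
    intro i
    show AA p N B i ⊔ jennings p G (i + 1) = jennings p G (i + 1)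
    have : AA p N B i = ⊥ := by
      show MN p N B ⊓ jennings p G i = ⊥
      rw [hMB B le_rfl, bot_inf_eq]
    rw [this, bot_sup_eq]
  have hX1 : ∀ i, Xc p N 1 i = (N ⊓ jennings p G i) ⊔ jennings p G (i + 1) := by
    intro i
    show AA p N 1 i ⊔ jennings p G (i + 1) = _
    show (MN p N 1 ⊓ jennings p G i) ⊔ jennings p G (i + 1) = _
    rw [MN_one]
  choose lX hlXchain hlXmem using fun i : ℕ =>
    exists_concatX N ℓ hℓ B i (B - 1) 1 (by omega)
  have hXtople : ∀ i, Xc p N 1 i ≤ jennings p G i :=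
    fun i => sup_le inf_le_right (jennings_antitone p G (Nat.le_succ i))
  choose fr hfr using fun i : ℕ => PChain.exists_chain hp hPG (hXtople i)
  set LG : ℕ → List G := fun i => fr i ++ lX i with hLG
  have hLGchain : ∀ i, PChain p (jennings p G (i + 1)) (jennings p G i) (LG i) := by
    intro i
    have h1 := hlXchain i
    rw [hXB i] at h1
    exact (hfr i).append h1
  have hfrN : ∀ i x, x ∈ fr i → x ∉ N := by
    intro i x hx hxN
    have h2 := (hfr i).mem_top_not_bot x hx
    apply h2.2
    rw [hX1 i]
    exact Subgroup.mem_sup_left (Subgroup.mem_inf.mpr ⟨hxN, h2.1⟩)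
  -- N-side concatenated chains
  have hYB : ∀ k, Yk p N k B = MN p N (k + 1) := by
    intro k
    show MN p N (k + 1) ⊔ AA p N k B = MN p N (k + 1)
    have : AA p N k B = ⊥ := by
      show MN p N k ⊓ jennings p G B = ⊥
      rw [hDGB B le_rfl, inf_bot_eq]
    rw [this, sup_bot_eq]
  have hY1 : ∀ k, Yk p N k 1 = MN p N k := by
    intro k
    show MN p N (k + 1) ⊔ (MN p N k ⊓ jennings p G 1) = MN p N k
    rw [jennings_one, inf_top_eq]
    exact sup_eq_right.mpr (MN_anti N (Nat.le_succ k))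
  choose lN hlNchain hlNmem using fun k : ℕ =>
    exists_concatY N ℓ hℓ B k (B - 1) 1 (by omega)
  have hLNchain : ∀ k, PChain p (MN p N (k + 1)) (MN p N k) (lN k) := by
    intro k
    have h1 := hlNchain k
    rw [hYB k, hY1 k] at h1
    exact h1
  -- the Jennings set
  set S : Set G := {x | ∃ i, 1 ≤ i ∧ i < B ∧ x ∈ LG i} with hSdef
  -- membership of base chain elements in `LG`
  have hbase_mem_LG : ∀ k i x, 1 ≤ k → k < B → x ∈ ℓ k i → x ∈ LG i := by
    intro k i x hk hkB hx
    show x ∈ fr i ++ lX i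
    rw [List.mem_append]
    exact Or.inr ((hlXmem i x).mpr ⟨k, hk, hkB, hx⟩)
  -- layer decomposition on the G side
  have hlayerG : ∀ i, 1 ≤ i → i < B →
      S ∩ ((jennings p G i : Set G) \ (jennings p G (i + 1) : Set G)) = {x | x ∈ LG i} := by
    intro i hi hiB
    ext x
    constructor
    · rintro ⟨⟨j, hj1, hjB, hxj⟩, hxin, hxnotin⟩
      have hj := (hLGchain j).mem_top_not_bot x hxj
      have hij : i = j := by
        by_contra hne
        rcases lt_or_gt_of_ne hne with hlt | hgt
        · exact hxnotin (jennings_antitone p G (by omega : i + 1 ≤ j) hj.1)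
        · exact hj.2 (jennings_antitone p G (by omega : j + 1 ≤ i) hxin)
      exact hij ▸ hxj
    · intro hx
      have h2 := (hLGchain i).mem_top_not_bot x hx
      exact ⟨⟨i, hi, hiB, hx⟩, h2.1, h2.2⟩
  -- 1 is not in S
  have h1S : (1 : G) ∉ S := by
    rintro ⟨i, hi1, hiB, hx⟩
    exact ((hLGchain i).mem_top_not_bot 1 hx).2 (one_mem _)
  -- G-side Jennings set property
  have hJG : IsJenningsSet p S := by
    refine ⟨h1S, fun i hi => ?_⟩
    rcases lt_or_ge i B with hiB | hBi
    · rw [hlayerG i hi hiB]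
      constructor
      · rw [sup_comm, (hLGchain i).closure_sup]
      · rw [(hLGchain i).card hp, (hLGchain i).card_set]
    · have hbot1 : jennings p G i = ⊥ := hDGB i hBi
      have hbot2 : jennings p G (i + 1) = ⊥ := hDGB (i + 1) (by omega)
      have hempty : S ∩ ((jennings p G i : Set G) \ (jennings p G (i + 1) : Set G)) = ∅ := by
        rw [hbot1, hbot2]
        simp
      rw [hempty, hbot1, hbot2]
      constructor
      · rw [Subgroup.closure_empty, bot_sup_eq]
      · simp [Subgroup.card_bot]
  -- now the N side
  have hsub_inj : Function.Injective N.subtype := N.subtype_injective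
  -- identification of S ∩ N-layers
  have hlayerN : ∀ k, 1 ≤ k → k < B →
      S ∩ ((MN p N k : Set G) \ (MN p N (k + 1) : Set G)) = {x | x ∈ lN k} := by
    intro k hk hkB
    ext x
    constructor
    · rintro ⟨⟨j, hj1, hjB, hxj⟩, hxin, hxnotin⟩
      -- x ∈ LG j and x ∈ N, so x comes from some base chain ℓ k' j
      have hxN : x ∈ N := MN_le_N N k hxin
      have hxlX : x ∈ lX j := by
        have : x ∈ fr j ++ lX j := hxj
        rw [List.mem_append] at this
        rcases this with hfr' | h
        · exact absurd hxN (hfrN j x hfr')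
        · exact h
      obtain ⟨k', hk'1, hk'B, hxk'⟩ := (hlXmem j x).mp hxlX
      have hkk' : k = k' := by
        by_contra hne
        rcases lt_or_gt_of_ne hne with hlt | hgt
        · exact hxnotin (MN_anti N (by omega : k + 1 ≤ k') (hmemM k' j x hxk'))
        · exact (hnotM k' j x hxk') (MN_anti N (by omega : k' + 1 ≤ k) hxin)
      exact (hlNmem k x).mpr ⟨j, hj1, hjB, hkk' ▸ hxk'⟩
    · intro hx
      obtain ⟨i', hi'1, hi'B, hxi'⟩ := (hlNmem k x).mp hx
      refine ⟨⟨i', hi'1, hi'B, hbase_mem_LG k i' x ?_ hkB hxi'⟩, hmemM k i' x hxi', hnotM k i' x hxi'⟩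
      omega
  -- image of the subtype-level layer sets
  have himg : ∀ k,
      N.subtype '' ({x : ↥N | (x : G) ∈ S} ∩
        ((jennings p ↥N k : Set ↥N) \ (jennings p ↥N (k + 1) : Set ↥N))) =
      S ∩ ((MN p N k : Set G) \ (MN p N (k + 1) : Set G)) := by
    intro k
    ext x
    constructor
    · rintro ⟨y, ⟨hyS, hyk, hyk1⟩, rfl⟩
      refine ⟨hyS, ⟨y, hyk, rfl⟩, ?_⟩
      rintro ⟨z, hz, hzeq⟩
      have : z = y := hsub_inj hzeq
      exact hyk1 (this ▸ hz)
    · rintro ⟨hxS, ⟨y, hyk, rfl⟩, hxnot⟩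
      exact ⟨y, ⟨hxS, hyk, fun hy1 => hxnot ⟨y, hy1, rfl⟩⟩, rfl⟩
  have hcardimg : ∀ k,
      Nat.card (({x : ↥N | (x : G) ∈ S} ∩
        ((jennings p ↥N k : Set ↥N) \ (jennings p ↥N (k + 1) : Set ↥N)) : Set ↥N)) =
      Nat.card ((S ∩ ((MN p N k : Set G) \ (MN p N (k + 1) : Set G)) : Set G)) := by
    intro k
    rw [← himg k, Nat.card_coe_set_eq, Nat.card_coe_set_eq,
      Set.ncard_image_of_injective _ hsub_inj]
  have hcardMN : ∀ k, Nat.card (jennings p ↥N k) = Nat.card (MN p N k) := by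
    intro k
    exact Nat.card_congr (Subgroup.equivMapOfInjective _ _ hsub_inj).toEquiv
  have hJN : IsJenningsSet p {x : ↥N | (x : G) ∈ S} := by
    constructor
    · intro h1
      exact h1S (by simpa using h1)
    · intro k hk
      rcases lt_or_ge k B with hkB | hBk
      · constructor
        · apply Subgroup.map_injective hsub_inj
          rw [Subgroup.map_sup, MonoidHom.map_closure, himg k, hlayerN k hk hkB]
          show MN p N k = Subgroup.closure {x | x ∈ lN k} ⊔ MN p N (k + 1)
          rw [sup_comm, (hLNchain k).closure_sup]
        · rw [hcardimg k, hcardMN k, hcardMN (k + 1), hlayerN k hk hkB,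
            (hLNchain k).card hp, (hLNchain k).card_set]
      · have hbot1 : jennings p ↥N k = ⊥ := hjNB k hBk
        have hbot2 : jennings p ↥N (k + 1) = ⊥ := hjNB (k + 1) (by omega)
        have hempty : {x : ↥N | (x : G) ∈ S} ∩
            ((jennings p ↥N k : Set ↥N) \ (jennings p ↥N (k + 1) : Set ↥N)) = ∅ := by
          rw [hbot1, hbot2]
          simp
        rw [hempty, hbot1, hbot2]
        constructor
        · rw [Subgroup.closure_empty, bot_sup_eq]
        · simp [Subgroup.card_bot]
  exact ⟨S, hJG, hJN⟩
end

section
/- Let k be a field of characteristic p, G a finite p-group, and N a normal subgroup of G. Define ideals J_n = J_n(N,G) of kG recursively by J_1 = I(N)·I(G) and J_{n+1} = I(N)·J_n + J_n·I(N). Then the map Λ_N^n from I(N)kG / (I(N)I(G)) to I(N)^{p^n}·kG / J_{p^n} sending the class of x to the class of x^{p^n} is well defined, i.e., if x − y ∈ I(N)·I(G) with x, y ∈ I(N)·kG, then x^{p^n} − y^{p^n} ∈ J_{p^n}. -/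
/-- The ideals `J_n(N,G)`: `J_1 = I(N)·I(G)`, `J_{n+1} = I(N)·J_n + J_n·I(N)`.
Here `Jrel IN IG n` is `J_{n+1}`. -/
def Jrel {k R : Type*} [CommSemiring k] [Semiring R] [Algebra k R]
    (IN IG : Submodule k R) : ℕ → Submodule k R
  | 0 => IN * IG
  | n + 1 => IN * Jrel IN IG n + Jrel IN IG n * IN

section Aux

variable {k : Type*} [Field k] {G : Type*} [Group G]

open MonoidAlgebra Submodule

/-- The augmentation ideal `I(G)` is a left ideal. -/
theorem aux_top_mul_IG_le :
    (⊤ : Submodule k (MonoidAlgebra k G)) *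
      Submodule.span k {z : MonoidAlgebra k G | ∃ h : G, z = MonoidAlgebra.of k G h - 1} ≤
      Submodule.span k {z : MonoidAlgebra k G | ∃ h : G, z = MonoidAlgebra.of k G h - 1} := by
  rw [Submodule.mul_le]
  intro a _ b hb
  induction hb using Submodule.span_induction with
  | mem z hz =>
      obtain ⟨h, rfl⟩ := hz
      induction a using MonoidAlgebra.induction_on with
      | of g =>
          have : of k G g * (of k G h - 1) =
              (of k G (g * h) - 1) - (of k G g - 1) := by
            rw [mul_sub, mul_one, ← map_mul]; abel
          rw [this]
          exact sub_mem (subset_span ⟨g * h, rfl⟩) (subset_span ⟨g, rfl⟩)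
      | add f₁ f₂ h₁ h₂ => rw [add_mul]; exact add_mem (h₁ trivial) (h₂ trivial)
      | smul r f hf => rw [smul_mul_assoc]; exact smul_mem _ _ (hf trivial)
  | zero => rw [mul_zero]; exact zero_mem _
  | add u v _ _ hu hv => rw [mul_add]; exact add_mem hu hv
  | smul c u _ hu => rw [mul_smul_comm]; exact smul_mem _ _ hu

/-- The augmentation ideal `I(G)` is a right ideal. -/
theorem aux_IG_mul_top_le :
    Submodule.span k {z : MonoidAlgebra k G | ∃ h : G, z = MonoidAlgebra.of k G h - 1} *
      (⊤ : Submodule k (MonoidAlgebra k G)) ≤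
      Submodule.span k {z : MonoidAlgebra k G | ∃ h : G, z = MonoidAlgebra.of k G h - 1} := by
  rw [Submodule.mul_le]
  intro b hb a _
  induction hb using Submodule.span_induction with
  | mem z hz =>
      obtain ⟨h, rfl⟩ := hz
      induction a using MonoidAlgebra.induction_on with
      | of g =>
          have : (of k G h - 1) * of k G g =
              (of k G (h * g) - 1) - (of k G g - 1) := by
            rw [sub_mul, one_mul, ← map_mul]; abel
          rw [this]
          exact sub_mem (subset_span ⟨h * g, rfl⟩) (subset_span ⟨g, rfl⟩)
      | add f₁ f₂ h₁ h₂ => rw [mul_add]; exact add_mem (h₁ trivial) (h₂ trivial)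
      | smul r f hf => rw [mul_smul_comm]; exact smul_mem _ _ (hf trivial)
  | zero => rw [zero_mul]; exact zero_mem _
  | add u v _ _ hu hv => rw [add_mul]; exact add_mem hu hv
  | smul c u _ hu => rw [smul_mul_assoc]; exact smul_mem _ _ hu

variable (N : Subgroup G) [N.Normal]

/-- By normality of `N`, `kG · I(N) ≤ I(N) · kG`. -/
theorem aux_top_mul_IN_le :
    (⊤ : Submodule k (MonoidAlgebra k G)) *
      Submodule.span k {z : MonoidAlgebra k G | ∃ h ∈ N, z = MonoidAlgebra.of k G h - 1} ≤
      Submodule.span k {z : MonoidAlgebra k G | ∃ h ∈ N, z = MonoidAlgebra.of k G h - 1} * ⊤ := by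
  rw [Submodule.mul_le]
  intro a _ b hb
  induction hb using Submodule.span_induction with
  | mem z hz =>
      obtain ⟨h, hN, rfl⟩ := hz
      induction a using MonoidAlgebra.induction_on with
      | of g =>
          have : of k G g * (of k G h - 1) =
              (of k G (g * h * g⁻¹) - 1) * of k G g := by
            rw [mul_sub, mul_one, sub_mul, one_mul, ← map_mul, ← map_mul]
            congr 2
            group
          rw [this]
          exact Submodule.mul_mem_mul
            (Submodule.subset_span ⟨g * h * g⁻¹, Subgroup.Normal.conj_mem ‹N.Normal› h hN g, rfl⟩)
            trivial
      | add f₁ f₂ h₁ h₂ => rw [add_mul]; exact add_mem (h₁ trivial) (h₂ trivial)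
      | smul r f hf => rw [smul_mul_assoc]; exact smul_mem _ _ (hf trivial)
  | zero => rw [mul_zero]; exact zero_mem _
  | add u v _ _ hu hv => rw [mul_add]; exact add_mem hu hv
  | smul c u _ hu => rw [mul_smul_comm]; exact smul_mem _ _ hu

/-- By normality of `N`, `I(N) · kG ≤ kG · I(N)`. -/
theorem aux_IN_mul_top_le :
    Submodule.span k {z : MonoidAlgebra k G | ∃ h ∈ N, z = MonoidAlgebra.of k G h - 1} *
      (⊤ : Submodule k (MonoidAlgebra k G)) ≤
      ⊤ * Submodule.span k {z : MonoidAlgebra k G | ∃ h ∈ N, z = MonoidAlgebra.of k G h - 1} := by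
  rw [Submodule.mul_le]
  intro b hb a _
  induction hb using Submodule.span_induction with
  | mem z hz =>
      obtain ⟨h, hN, rfl⟩ := hz
      induction a using MonoidAlgebra.induction_on with
      | of g =>
          have : (of k G h - 1) * of k G g =
              of k G g * (of k G (g⁻¹ * h * g) - 1) := by
            rw [mul_sub, mul_one, sub_mul, one_mul, ← map_mul, ← map_mul]
            congr 2
            group
          rw [this]
          exact Submodule.mul_mem_mul trivial
            (Submodule.subset_span ⟨g⁻¹ * h * g, by
              simpa using Subgroup.Normal.conj_mem ‹N.Normal› h hN g⁻¹⟩)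
      | add f₁ f₂ h₁ h₂ => rw [mul_add]; exact add_mem (h₁ trivial) (h₂ trivial)
      | smul r f hf => rw [mul_smul_comm]; exact smul_mem _ _ (hf trivial)
  | zero => rw [zero_mul]; exact zero_mem _
  | add u v _ _ hu hv => rw [add_mul]; exact add_mem hu hv
  | smul c u _ hu => rw [smul_mul_assoc]; exact smul_mem _ _ hu

end Aux

section JrelAux

variable {k R : Type*} [CommSemiring k] [Semiring R] [Algebra k R] {IN IG : Submodule k R}

/-- Each `Jrel IN IG m` is a left ideal. -/
theorem Jrel_top_mul_le (hN : ⊤ * IN ≤ IN * ⊤) (hG : ⊤ * IG ≤ IG) :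
    ∀ m, ⊤ * Jrel IN IG m ≤ Jrel IN IG m := by
  intro m
  induction m with
  | zero =>
      show ⊤ * (IN * IG) ≤ IN * IG
      calc ⊤ * (IN * IG) = (⊤ * IN) * IG := by rw [mul_assoc]
        _ ≤ (IN * ⊤) * IG := mul_le_mul' hN le_rfl
        _ = IN * (⊤ * IG) := by rw [mul_assoc]
        _ ≤ IN * IG := mul_le_mul' le_rfl hG
  | succ m ih =>
      show ⊤ * (IN * Jrel IN IG m + Jrel IN IG m * IN) ≤
          IN * Jrel IN IG m + Jrel IN IG m * IN
      rw [mul_add]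
      apply sup_le
      · calc ⊤ * (IN * Jrel IN IG m) = (⊤ * IN) * Jrel IN IG m := by rw [mul_assoc]
          _ ≤ (IN * ⊤) * Jrel IN IG m := mul_le_mul' hN le_rfl
          _ = IN * (⊤ * Jrel IN IG m) := by rw [mul_assoc]
          _ ≤ IN * Jrel IN IG m := mul_le_mul' le_rfl ih
          _ ≤ _ := le_sup_left
      · calc ⊤ * (Jrel IN IG m * IN) = (⊤ * Jrel IN IG m) * IN := by rw [mul_assoc]
          _ ≤ Jrel IN IG m * IN := mul_le_mul' ih le_rfl
          _ ≤ _ := le_sup_right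

/-- Each `Jrel IN IG m` is a right ideal. -/
theorem Jrel_mul_top_le (hN : IN * ⊤ ≤ ⊤ * IN) (hG : IG * ⊤ ≤ IG) :
    ∀ m, Jrel IN IG m * ⊤ ≤ Jrel IN IG m := by
  intro m
  induction m with
  | zero =>
      show (IN * IG) * ⊤ ≤ IN * IG
      calc (IN * IG) * ⊤ = IN * (IG * ⊤) := by rw [mul_assoc]
        _ ≤ IN * IG := mul_le_mul' le_rfl hG
  | succ m ih =>
      show (IN * Jrel IN IG m + Jrel IN IG m * IN) * ⊤ ≤
          IN * Jrel IN IG m + Jrel IN IG m * IN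
      rw [add_mul]
      apply sup_le
      · calc (IN * Jrel IN IG m) * ⊤ = IN * (Jrel IN IG m * ⊤) := by rw [mul_assoc]
          _ ≤ IN * Jrel IN IG m := mul_le_mul' le_rfl ih
          _ ≤ _ := le_sup_left
      · calc (Jrel IN IG m * IN) * ⊤ = Jrel IN IG m * (IN * ⊤) := by rw [mul_assoc]
          _ ≤ Jrel IN IG m * (⊤ * IN) := mul_le_mul' le_rfl hN
          _ = (Jrel IN IG m * ⊤) * IN := by rw [mul_assoc]
          _ ≤ Jrel IN IG m * IN := mul_le_mul' ih le_rfl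
          _ ≤ _ := le_sup_right

/-- `(I(N)·kG) · J_m ≤ J_{m+1}`. -/
theorem A_mul_Jrel_le (hN : ⊤ * IN ≤ IN * ⊤) (hG : ⊤ * IG ≤ IG) (m : ℕ) :
    (IN * ⊤) * Jrel IN IG m ≤ Jrel IN IG (m + 1) := by
  calc (IN * ⊤) * Jrel IN IG m = IN * (⊤ * Jrel IN IG m) := by rw [mul_assoc]
    _ ≤ IN * Jrel IN IG m := mul_le_mul' le_rfl (Jrel_top_mul_le hN hG m)
    _ ≤ Jrel IN IG (m + 1) := le_sup_left

/-- `J_m · (I(N)·kG) ≤ J_{m+1}`. -/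
theorem Jrel_mul_A_le (hN : IN * ⊤ ≤ ⊤ * IN) (hG : IG * ⊤ ≤ IG) (m : ℕ) :
    Jrel IN IG m * (IN * ⊤) ≤ Jrel IN IG (m + 1) := by
  calc Jrel IN IG m * (IN * ⊤) ≤ Jrel IN IG m * (⊤ * IN) := mul_le_mul' le_rfl hN
    _ = (Jrel IN IG m * ⊤) * IN := by rw [mul_assoc]
    _ ≤ Jrel IN IG m * IN := mul_le_mul' (Jrel_mul_top_le hN hG m) le_rfl
    _ ≤ Jrel IN IG (m + 1) := le_sup_right

end JrelAux

/-- The map `Λ_N^n : I(N)kG/(I(N)I(G)) → I(N)^(p^n)kG/J_{p^n}`,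
`x ↦ x^(p^n)`, is well defined: if `x, y ∈ I(N)·kG` and `x - y ∈ I(N)·I(G)`, then
`x^(p^n) - y^(p^n) ∈ J_{p^n}(N,G)`. -/
theorem pow_sub_pow_mem_Jrel (p : ℕ) (hp : p.Prime) (k : Type*) [Field k] [CharP k p]
    (G : Type*) [Group G] [Finite G] (hG : ∃ s : ℕ, Nat.card G = p ^ s)
    (N : Subgroup G) [N.Normal] (n : ℕ) (x y : MonoidAlgebra k G)
    (hx : x ∈ Submodule.span k
        {z : MonoidAlgebra k G | ∃ h ∈ N, z = MonoidAlgebra.of k G h - 1} * ⊤)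
    (hy : y ∈ Submodule.span k
        {z : MonoidAlgebra k G | ∃ h ∈ N, z = MonoidAlgebra.of k G h - 1} * ⊤)
    (hxy : x - y ∈ Submodule.span k
        {z : MonoidAlgebra k G | ∃ h ∈ N, z = MonoidAlgebra.of k G h - 1} *
        Submodule.span k {z : MonoidAlgebra k G | ∃ h : G, z = MonoidAlgebra.of k G h - 1}) :
    x ^ p ^ n - y ^ p ^ n ∈
      Jrel (Submodule.span k {z : MonoidAlgebra k G | ∃ h ∈ N, z = MonoidAlgebra.of k G h - 1})
        (Submodule.span k {z : MonoidAlgebra k G | ∃ h : G, z = MonoidAlgebra.of k G h - 1})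
        (p ^ n - 1) := by
  set IN := Submodule.span k {z : MonoidAlgebra k G | ∃ h ∈ N, z = MonoidAlgebra.of k G h - 1}
    with hIN
  set IG := Submodule.span k {z : MonoidAlgebra k G | ∃ h : G, z = MonoidAlgebra.of k G h - 1}
    with hIG
  have hNle : ⊤ * IN ≤ IN * ⊤ := aux_top_mul_IN_le N
  have hNle' : IN * ⊤ ≤ ⊤ * IN := aux_IN_mul_top_le N
  have hGle : ⊤ * IG ≤ IG := aux_top_mul_IG_le
  have hGle' : IG * ⊤ ≤ IG := aux_IG_mul_top_le
  -- (x - y) * y^j ∈ J_j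
  have hdy : ∀ j : ℕ, (x - y) * y ^ j ∈ Jrel IN IG j := by
    intro j
    induction j with
    | zero => simpa [Jrel] using hxy
    | succ j ih =>
        have : (x - y) * y ^ (j + 1) = ((x - y) * y ^ j) * y := by
          rw [pow_succ, mul_assoc]
        rw [this]
        exact Jrel_mul_A_le hNle' hGle' j (Submodule.mul_mem_mul ih hy)
  -- main induction: x^(m+1) - y^(m+1) ∈ J_m
  have key : ∀ m : ℕ, x ^ (m + 1) - y ^ (m + 1) ∈ Jrel IN IG m := by
    intro m
    induction m with
    | zero => simpa [Jrel] using hxy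
    | succ m ih =>
        have e : x ^ (m + 2) - y ^ (m + 2) =
            x * (x ^ (m + 1) - y ^ (m + 1)) + (x - y) * y ^ (m + 1) := by
          rw [mul_sub, sub_mul, ← pow_succ', ← pow_succ']
          abel
        rw [e]
        exact add_mem
          (A_mul_Jrel_le hNle hGle m (Submodule.mul_mem_mul hx ih))
          (hdy (m + 1))
  have hpos : 0 < p ^ n := Nat.pow_pos hp.pos
  have h1 : p ^ n - 1 + 1 = p ^ n := Nat.succ_pred_eq_of_pos hpos
  have := key (p ^ n - 1)
  rwa [h1] at this
end

section
/- Let k be a commutative ring, G a group, and L, N normal subgroups of G. Then I(L)·(I(N)kG) + I(N)·(I(L)kG) = I([L,N])·kG + I(N)·(I(L)kG) as ideals of kG. -/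
open MonoidAlgebra
open scoped commutatorElement

section Aux

variable {k : Type*} [CommRing k] {G : Type*} [Group G]

private noncomputable def aug (k : Type*) [CommRing k] {G : Type*} [Group G] (H : Subgroup G) :
    Submodule k (MonoidAlgebra k G) :=
  Submodule.span k {z : MonoidAlgebra k G | ∃ g ∈ H, z = MonoidAlgebra.of k G g - 1}

private lemma aug_gen_mem {H : Subgroup G} {h : G} (hh : h ∈ H) :
    MonoidAlgebra.of k G h - 1 ∈ aug k H := Submodule.subset_span ⟨h, hh, rfl⟩

private lemma of_mul_aug (g h : G) :
    MonoidAlgebra.of k G g * (MonoidAlgebra.of k G h - 1)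
      = (MonoidAlgebra.of k G (g * h * g⁻¹) - 1) * MonoidAlgebra.of k G g := by
  have hgh : g * h * g⁻¹ * g = g * h := by group
  simp [mul_sub, sub_mul, ← map_mul, hgh]

private lemma key_identity (l n : G) :
    (MonoidAlgebra.of k G l - 1) * (MonoidAlgebra.of k G n - 1) =
      MonoidAlgebra.of k G (n * l) * (MonoidAlgebra.of k G (l⁻¹ * n⁻¹ * l * n) - 1) +
        (MonoidAlgebra.of k G n - 1) * (MonoidAlgebra.of k G l - 1) := by
  have h1 : n * l * (l⁻¹ * n⁻¹ * l * n) = l * n := by group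
  simp only [mul_sub, sub_mul, ← map_mul, mul_one, one_mul, h1]
  abel

/-- If `H` is normal and `M` is closed under left multiplication, then so is `aug k H * M`. -/
private lemma aug_mul_left_closed (H : Subgroup G) [hH : H.Normal]
    (M : Submodule k (MonoidAlgebra k G))
    (hM : ∀ (a : MonoidAlgebra k G), ∀ m ∈ M, a * m ∈ M)
    (a : MonoidAlgebra k G) : ∀ m ∈ aug k H * M, a * m ∈ aug k H * M := by
  intro m hm
  refine Submodule.mul_induction_on hm (fun s hs t ht => ?_)
    (fun x y hx hy => by rw [mul_add]; exact add_mem hx hy)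
  induction hs using Submodule.span_induction with
  | mem z hz =>
      obtain ⟨h, hh, rfl⟩ := hz
      induction a using MonoidAlgebra.induction_on with
      | of g =>
          rw [← mul_assoc, of_mul_aug, mul_assoc]
          exact Submodule.mul_mem_mul (aug_gen_mem (hH.conj_mem h hh g)) (hM _ t ht)
      | add f₁ f₂ h₁ h₂ =>
          rw [add_mul]; exact add_mem h₁ h₂
      | smul r f hf =>
          rw [smul_mul_assoc]; exact Submodule.smul_mem _ r hf
  | zero => simpa using zero_mem _
  | add x y hx hy ihx ihy =>
      rw [add_mul, mul_add]; exact add_mem ihx ihy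
  | smul r x hx ihx =>
      rw [smul_mul_assoc, mul_smul_comm]; exact Submodule.smul_mem _ r ihx

private lemma sup_left_closed (M N : Submodule k (MonoidAlgebra k G))
    (hM : ∀ (a : MonoidAlgebra k G), ∀ m ∈ M, a * m ∈ M)
    (hN : ∀ (a : MonoidAlgebra k G), ∀ m ∈ N, a * m ∈ N)
    (a : MonoidAlgebra k G) : ∀ m ∈ M ⊔ N, a * m ∈ M ⊔ N := by
  intro m hm
  obtain ⟨x, hx, y, hy, rfl⟩ := Submodule.mem_sup.mp hm
  rw [mul_add]
  exact add_mem (Submodule.mem_sup_left (hM a x hx)) (Submodule.mem_sup_right (hN a y hy))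

end Aux

/-- For a commutative ring `k`, a group `G` and normal subgroups `L, N`
of `G`, one has `I(L)·(I(N)kG) + I(N)·(I(L)kG) = I([L,N])·kG + I(N)·(I(L)kG)` inside the
group ring `kG`. -/
theorem aug_mul_relAug_add (k : Type*) [CommRing k] (G : Type*) [Group G]
    (L N : Subgroup G) [L.Normal] [N.Normal] :
    Submodule.span k {z : MonoidAlgebra k G | ∃ g ∈ L, z = MonoidAlgebra.of k G g - 1} *
        (Submodule.span k {z : MonoidAlgebra k G | ∃ g ∈ N, z = MonoidAlgebra.of k G g - 1} * ⊤) +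
      Submodule.span k {z : MonoidAlgebra k G | ∃ g ∈ N, z = MonoidAlgebra.of k G g - 1} *
        (Submodule.span k {z : MonoidAlgebra k G | ∃ g ∈ L, z = MonoidAlgebra.of k G g - 1} * ⊤)
    = Submodule.span k {z : MonoidAlgebra k G | ∃ g ∈ ⁅L, N⁆, z = MonoidAlgebra.of k G g - 1} * ⊤ +
      Submodule.span k {z : MonoidAlgebra k G | ∃ g ∈ N, z = MonoidAlgebra.of k G g - 1} *
        (Submodule.span k {z : MonoidAlgebra k G | ∃ g ∈ L, z = MonoidAlgebra.of k G g - 1} * ⊤) := by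
  show aug k L * (aug k N * ⊤) + aug k N * (aug k L * ⊤)
      = aug k ⁅L, N⁆ * ⊤ + aug k N * (aug k L * ⊤)
  have htop : ∀ (a : MonoidAlgebra k G), ∀ m ∈ (⊤ : Submodule k (MonoidAlgebra k G)),
      a * m ∈ (⊤ : Submodule k (MonoidAlgebra k G)) := fun _ _ _ => trivial
  have hNT := aug_mul_left_closed N ⊤ htop
  have hLT := aug_mul_left_closed L ⊤ htop
  have hCT := aug_mul_left_closed ⁅L, N⁆ ⊤ htop
  have hLNT := aug_mul_left_closed L (aug k N * ⊤) hNT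
  have hNLT := aug_mul_left_closed N (aug k L * ⊤) hLT
  rw [Submodule.add_eq_sup, Submodule.add_eq_sup]
  refine le_antisymm (sup_le ?_ le_sup_right) (sup_le ?_ le_sup_right)
  · -- aug L * (aug N * ⊤) ≤ aug ⁅L,N⁆ * ⊤ ⊔ aug N * (aug L * ⊤)
    rw [Submodule.mul_le]
    intro s hs t ht
    induction hs using Submodule.span_induction with
    | mem z hz =>
        obtain ⟨l, hl, rfl⟩ := hz
        refine Submodule.mul_induction_on ht (fun s' hs' u hu => ?_)
          (fun x y hx hy => by rw [mul_add]; exact add_mem hx hy)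
        induction hs' using Submodule.span_induction with
        | mem w hw =>
            obtain ⟨n, hn, rfl⟩ := hw
            have hc : l⁻¹ * n⁻¹ * l * n ∈ ⁅L, N⁆ := by
              simpa [commutatorElement_def] using
                Subgroup.commutator_mem_commutator (inv_mem hl) (inv_mem hn)
            rw [← mul_assoc (MonoidAlgebra.of k G l - 1) (MonoidAlgebra.of k G n - 1) u,
              key_identity, add_mul, mul_assoc (MonoidAlgebra.of k G (n * l)) _ u,
              mul_assoc (MonoidAlgebra.of k G n - 1) _ u]
            refine add_mem (Submodule.mem_sup_left ?_) (Submodule.mem_sup_right ?_)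
            · exact hCT _ _ (Submodule.mul_mem_mul (aug_gen_mem hc) trivial)
            · exact Submodule.mul_mem_mul (aug_gen_mem hn)
                (Submodule.mul_mem_mul (aug_gen_mem hl) trivial)
        | zero => simpa using zero_mem _
        | add x y hx hy ihx ihy =>
            rw [add_mul, mul_add]; exact add_mem ihx ihy
        | smul r x hx ihx =>
            rw [smul_mul_assoc, mul_smul_comm]; exact Submodule.smul_mem _ r ihx
    | zero => simpa using zero_mem _
    | add x y hx hy ihx ihy =>
        rw [add_mul]; exact add_mem ihx ihy
    | smul r x hx ihx =>
        rw [smul_mul_assoc]; exact Submodule.smul_mem _ r ihx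
  · -- aug ⁅L,N⁆ * ⊤ ≤ aug L * (aug N * ⊤) ⊔ aug N * (aug L * ⊤)
    have hsum := sup_left_closed (aug k L * (aug k N * ⊤)) (aug k N * (aug k L * ⊤)) hLNT hNLT
    rw [Submodule.mul_le]
    intro s hs u hu
    induction hs using Submodule.span_induction with
    | mem z hz =>
        obtain ⟨g, hg, rfl⟩ := hz
        rw [Subgroup.commutator_def] at hg
        induction hg using Subgroup.closure_induction with
        | mem x hx =>
            obtain ⟨l, hl, n, hn, rfl⟩ := hx
            have hc : (MonoidAlgebra.of k G (⁅l, n⁆ : G) - 1)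
                = MonoidAlgebra.of k G (l * n) *
                    ((MonoidAlgebra.of k G l⁻¹ - 1) * (MonoidAlgebra.of k G n⁻¹ - 1) -
                      (MonoidAlgebra.of k G n⁻¹ - 1) * (MonoidAlgebra.of k G l⁻¹ - 1)) := by
              have h := key_identity (k := k) (G := G) l⁻¹ n⁻¹
              rw [inv_inv, inv_inv] at h
              have h' : MonoidAlgebra.of k G (n⁻¹ * l⁻¹) *
                    (MonoidAlgebra.of k G (l * n * l⁻¹ * n⁻¹) - 1)
                  = (MonoidAlgebra.of k G l⁻¹ - 1) * (MonoidAlgebra.of k G n⁻¹ - 1) -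
                      (MonoidAlgebra.of k G n⁻¹ - 1) * (MonoidAlgebra.of k G l⁻¹ - 1) :=
                eq_sub_iff_add_eq.mpr h.symm
              rw [commutatorElement_def]
              calc MonoidAlgebra.of k G (l * n * l⁻¹ * n⁻¹) - 1
                  = MonoidAlgebra.of k G (l * n) * (MonoidAlgebra.of k G (n⁻¹ * l⁻¹) *
                      (MonoidAlgebra.of k G (l * n * l⁻¹ * n⁻¹) - 1)) := by
                    rw [← mul_assoc, ← map_mul,
                      show l * n * (n⁻¹ * l⁻¹) = 1 by group, map_one, one_mul]
                _ = _ := by rw [h']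
            have heq : (MonoidAlgebra.of k G (⁅l, n⁆ : G) - 1) * u
                = MonoidAlgebra.of k G (l * n) *
                    ((MonoidAlgebra.of k G l⁻¹ - 1) * ((MonoidAlgebra.of k G n⁻¹ - 1) * u)) -
                  MonoidAlgebra.of k G (l * n) *
                    ((MonoidAlgebra.of k G n⁻¹ - 1) * ((MonoidAlgebra.of k G l⁻¹ - 1) * u)) := by
              rw [hc]; noncomm_ring
            rw [heq]
            refine sub_mem ?_ ?_
            · exact Submodule.mem_sup_left (hLNT _ _ (Submodule.mul_mem_mul
                (aug_gen_mem (inv_mem hl))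
                (Submodule.mul_mem_mul (aug_gen_mem (inv_mem hn)) trivial)))
            · exact Submodule.mem_sup_right (hNLT _ _ (Submodule.mul_mem_mul
                (aug_gen_mem (inv_mem hn))
                (Submodule.mul_mem_mul (aug_gen_mem (inv_mem hl)) trivial)))
        | one => rw [map_one, sub_self, zero_mul]; exact zero_mem _
        | mul x y hx hy ihx ihy =>
            have heq : (MonoidAlgebra.of k G (x * y) - 1) * u
                = MonoidAlgebra.of k G x * ((MonoidAlgebra.of k G y - 1) * u) +
                    (MonoidAlgebra.of k G x - 1) * u := by
              rw [map_mul]; noncomm_ring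
            rw [heq]
            exact add_mem (hsum _ _ ihy) ihx
        | inv x hx ihx =>
            have heq : (MonoidAlgebra.of k G x⁻¹ - 1) * u
                = -(MonoidAlgebra.of k G x⁻¹ * ((MonoidAlgebra.of k G x - 1) * u)) := by
              have h1 : MonoidAlgebra.of k G x⁻¹ * MonoidAlgebra.of k G x = 1 := by
                rw [← map_mul, inv_mul_cancel, map_one]
              rw [sub_mul, sub_mul, one_mul, mul_sub, ← mul_assoc, h1, one_mul, neg_sub]
            rw [heq]
            exact neg_mem (hsum _ _ ihx)
    | zero => simpa using zero_mem _
    | add x y hx hy ihx ihy =>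
        rw [add_mul]; exact add_mem ihx ihy
    | smul r x hx ihx =>
        rw [smul_mul_assoc]; exact Submodule.smul_mem _ r ihx
end

section
/- Let p be an odd prime, m ≥ 1, and let G be a finite p-group with normal cyclic subgroup ⟨a⟩ of order p^m such that γ_i(G) = ⟨a^{p^{(i−2)c}}⟩ for all i ≥ 2, where c = m − o for some 0 ≤ o < m. Then for every n ≥ 0, the Jennings subgroup D_{p^n}(G) equals G^{p^n} = ⟨g^{p^n} : g ∈ G⟩. -/
private lemma aux_three_pow (k : ℕ) (hk : 1 ≤ k) : k + 2 ≤ 3 ^ k := by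
  induction k with
  | zero => omega
  | succ k ih =>
    rcases Nat.eq_or_lt_of_le hk with h | h
    · simp [← h]
    · have h1 : 1 ≤ k := by omega
      have := ih h1
      have : 3 * (k + 2) ≤ 3 * 3 ^ k := by omega
      calc k + 3 ≤ 3 * (k + 2) := by omega
        _ ≤ 3 * 3 ^ k := this
        _ = 3 ^ (k + 1) := by ring

private lemma aux_pow_comm {G : Type*} [Group G] (a : G) (u v : ℕ) (z : ℤ) :
    ((a ^ u) ^ z) ^ v = (a ^ (u * v)) ^ z := by
  rw [← zpow_natCast ((a ^ u) ^ z), ← zpow_mul, mul_comm, zpow_mul, zpow_natCast,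
    ← pow_mul]

/-- Let `p` be an odd prime, `m ≥ 1`, and `G` a finite `p`-group with a
normal cyclic subgroup `⟨a⟩` of order `p^m` such that `γ_i(G) = ⟨a^(p^((i−2)(m−o)))⟩` for
all `i ≥ 2`, where `0 ≤ o < m`. Then `D_{p^n}(G) = G^{p^n}` for every `n ≥ 0`. -/
theorem jennings_pow_eq_pow_subgroup (p : ℕ) (hp : p.Prime) (hodd : Odd p)
    (G : Type*) [Group G] [Finite G] (hG : ∃ s : ℕ, Nat.card G = p ^ s)
    (a : G) (m o : ℕ) (hm : 1 ≤ m) (ho : o < m)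
    [(Subgroup.zpowers a).Normal] (ha : orderOf a = p ^ m)
    (hγ : ∀ i : ℕ, 2 ≤ i →
      (⊤ : Subgroup G).lowerCentralSeries (i - 1) = Subgroup.zpowers (a ^ p ^ ((i - 2) * (m - o)))) :
    ∀ n : ℕ, jennings p G (p ^ n) = Subgroup.closure {x : G | ∃ g : G, x = g ^ p ^ n} := by
  have hp3 : 3 ≤ p := by
    have h2 := hp.two_le
    have : p ≠ 2 := by rintro rfl; simp [Nat.odd_iff] at hodd
    omega
  intro n
  apply le_antisymm
  · refine iSup_le fun i => iSup_le fun j => iSup_le fun hij => ?_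
    refine (Subgroup.closure_le _).mpr ?_
    rintro x ⟨y, hy, rfl⟩
    by_cases hjn : n ≤ j
    · apply Subgroup.subset_closure
      exact ⟨y ^ p ^ (j - n), by rw [← pow_mul, ← pow_add, Nat.sub_add_cancel hjn]⟩
    · push_neg at hjn
      have hi : 1 ≤ i := by
        by_contra h
        push_neg at h
        interval_cases i
        simp only [zero_add, one_mul] at hij
        exact absurd ((Nat.pow_le_pow_iff_right hp.one_lt).mp hij) (by omega)
      have h1 : p ^ (n - j) ≤ i + 1 := by
        have hsplit : p ^ n = p ^ (n - j) * p ^ j := by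
          rw [← pow_add, Nat.sub_add_cancel hjn.le]
        rw [hsplit] at hij
        exact Nat.le_of_mul_le_mul_right hij (Nat.pow_pos (n := j) hp.pos)
      have h2 : n - j ≤ i - 1 := by
        have h3 : (n - j) + 2 ≤ 3 ^ (n - j) := aux_three_pow _ (by omega)
        have h4 : 3 ^ (n - j) ≤ p ^ (n - j) := Nat.pow_le_pow_left hp3 _
        omega
      have hy' : y ∈ Subgroup.zpowers (a ^ p ^ ((i - 1) * (m - o))) := by
        have := hγ (i + 1) (by omega)
        simp only [Nat.add_sub_cancel] at this
        rw [this] at hy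
        simpa using hy
      obtain ⟨z, hz⟩ := hy'
      apply Subgroup.subset_closure
      have hn : n ≤ (i - 1) * (m - o) + j := by
        have hc : 1 ≤ m - o := by omega
        have : n - j ≤ (i - 1) * (m - o) := le_trans h2 (Nat.le_mul_of_pos_right _ hc)
        omega
      refine ⟨(a ^ p ^ ((i - 1) * (m - o) + j - n)) ^ z, ?_⟩
      rw [← hz, aux_pow_comm, aux_pow_comm, ← pow_add, ← pow_add,
        Nat.sub_add_cancel hn]
  · refine le_trans ?_ (le_iSup_of_le 0 (le_iSup_of_le n (le_iSup_of_le
      (by simp) le_rfl)))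
    apply Subgroup.closure_mono
    rintro x ⟨g, rfl⟩
    exact ⟨g, by simp, rfl⟩
end
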